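/- arXiv:1308.2096 — 13 statements merged into one kernel-verified Lean document; each statement's English description precedes it below -/
import Mathlib

section
/- Let G be a finite simple graph with minimum degree δ and maximum degree Δ, and let k and r be integers with -δ ≤ k ≤ Δ and 0 ≤ r ≤ (k+δ)/2. If G contains a defensive k-alliance, then G contains a defensive (k-2r)-alliance and a_{k-2r}(G) + r ≤ a_k(G). -/
open Finset

variable {V : Type*}

/-- `degIn G S v` is the number of neighbors that `v` has in `S` (denoted `δ_S(v)`). -/
def degIn [Fintype V] [DecidableEq V] (G : SimpleGraph V) [DecidableRel G.Adj]
    (S : Finset V) (v : V) : ℕ :=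
  (G.neighborFinset v ∩ S).card

/-- A nonempty set `S` is a defensive `k`-alliance in `G` if every vertex of `S` has at least
`k` more neighbors inside `S` than outside. -/
def IsDefensiveKAlliance [Fintype V] [DecidableEq V] (G : SimpleGraph V) [DecidableRel G.Adj]
    (k : ℤ) (S : Finset V) : Prop :=
  S.Nonempty ∧ ∀ v ∈ S, (degIn G Sᶜ v : ℤ) + k ≤ (degIn G S v : ℤ)

/-- The defensive `k`-alliance number: minimum cardinality of a defensive `k`-alliance. -/
noncomputable def defensiveAllianceNum [Fintype V] [DecidableEq V] (G : SimpleGraph V)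
    [DecidableRel G.Adj] (k : ℤ) : ℕ :=
  sInf {m : ℕ | ∃ S : Finset V, IsDefensiveKAlliance G k S ∧ S.card = m}

/-- Theorem (monotonicity of the defensive `k`-alliance number): if `-δ ≤ k ≤ Δ` and
`0 ≤ r ≤ (k+δ)/2`, and `G` contains a defensive `k`-alliance, then `G` contains a defensive
`(k-2r)`-alliance and `a_{k-2r}(G) + r ≤ a_k(G)`. -/
theorem defensiveAllianceNum_sub_two_mul_add_le [Fintype V] [DecidableEq V] [Nonempty V]
    (G : SimpleGraph V) [DecidableRel G.Adj] (k : ℤ) (r : ℕ)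
    (hk1 : -(G.minDegree : ℤ) ≤ k) (hk2 : k ≤ (G.maxDegree : ℤ))
    (hr : (r : ℚ) ≤ ((k : ℚ) + (G.minDegree : ℚ)) / 2)
    (hex : ∃ S : Finset V, IsDefensiveKAlliance G k S) :
    (∃ S : Finset V, IsDefensiveKAlliance G (k - 2 * r) S) ∧
      defensiveAllianceNum G (k - 2 * r) + r ≤ defensiveAllianceNum G k := by

  classical
  obtain ⟨S0, hS0⟩ := hex
  have hne : {m : ℕ | ∃ S : Finset V, IsDefensiveKAlliance G k S ∧ S.card = m}.Nonempty :=
    ⟨S0.card, S0, hS0, rfl⟩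
  obtain ⟨S, hS, hcard⟩ := Nat.sInf_mem hne
  obtain ⟨hSne, hSdef⟩ := hS
  have h2r : (2 * r : ℤ) ≤ k + G.minDegree := by
    have : (2 * r : ℚ) ≤ (k : ℚ) + G.minDegree := by linarith
    exact_mod_cast this
  have hsplit : ∀ v, degIn G S v + degIn G Sᶜ v = G.degree v := by
    intro v
    unfold degIn
    rw [← card_union_of_disjoint]
    · rw [← inter_union_distrib_left, union_compl, inter_univ]
      rfl
    · exact disjoint_left.mpr fun a ha hb =>
        (mem_compl.mp (mem_inter.mp hb).2) (mem_inter.mp ha).2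
  have hbig : ∀ v ∈ S, r ≤ degIn G S v := by
    intro v hv
    have h1 := hSdef v hv
    have h2' : (G.minDegree : ℤ) ≤ (G.degree v : ℤ) := by
      exact_mod_cast G.minDegree_le_degree v
    have h3' : (degIn G S v : ℤ) + (degIn G Sᶜ v : ℤ) = (G.degree v : ℤ) := by
      exact_mod_cast hsplit v
    have : (r : ℤ) ≤ degIn G S v := by linarith
    exact_mod_cast this
  -- S.card ≥ r + 1
  obtain ⟨v0, hv0⟩ := hSne
  have hsub : G.neighborFinset v0 ∩ S ⊆ S.erase v0 := by
    intro a ha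
    rw [mem_inter, SimpleGraph.mem_neighborFinset] at ha
    exact mem_erase.mpr ⟨ha.1.ne', ha.2⟩
  have hScard : r + 1 ≤ S.card := by
    have h1 := hbig v0 hv0
    have h2 : degIn G S v0 ≤ (S.erase v0).card := card_le_card hsub
    have h3 : (S.erase v0).card = S.card - 1 := card_erase_of_mem hv0
    have h4 : 1 ≤ S.card := card_pos.mpr ⟨v0, hv0⟩
    unfold degIn at h1 h2
    omega
  obtain ⟨X, hXS, hXcard⟩ := Finset.exists_subset_card_eq (s := S) (n := r) (by omega)
  set S' : Finset V := S \ X with hS'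
  have hS'card : S'.card = S.card - r := by
    rw [hS', card_sdiff_of_subset hXS, hXcard]
  have hS'ne : S'.Nonempty := card_pos.mp (by omega)
  have hbound1 : ∀ v, degIn G S v ≤ degIn G S' v + r := by
    intro v
    have hsub2 : G.neighborFinset v ∩ S ⊆ (G.neighborFinset v ∩ S') ∪ X := by
      intro a ha
      rw [mem_inter] at ha
      by_cases haX : a ∈ X
      · exact mem_union_right _ haX
      · exact mem_union_left _ (mem_inter.mpr ⟨ha.1, mem_sdiff.mpr ⟨ha.2, haX⟩⟩)
    calc degIn G S v ≤ ((G.neighborFinset v ∩ S') ∪ X).card := card_le_card hsub2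
      _ ≤ degIn G S' v + r := by
          rw [← hXcard]; exact card_union_le _ _
  have hbound2 : ∀ v, degIn G S'ᶜ v ≤ degIn G Sᶜ v + r := by
    intro v
    have hsub2 : G.neighborFinset v ∩ S'ᶜ ⊆ (G.neighborFinset v ∩ Sᶜ) ∪ X := by
      intro a ha
      rw [mem_inter, mem_compl, hS', mem_sdiff] at ha
      by_cases haX : a ∈ X
      · exact mem_union_right _ haX
      · refine mem_union_left _ (mem_inter.mpr ⟨ha.1, mem_compl.mpr ?_⟩)
        intro haS
        exact ha.2 ⟨haS, haX⟩
    calc degIn G S'ᶜ v ≤ ((G.neighborFinset v ∩ Sᶜ) ∪ X).card := card_le_card hsub2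
      _ ≤ degIn G Sᶜ v + r := by
          rw [← hXcard]; exact card_union_le _ _
  have hS'def : IsDefensiveKAlliance G (k - 2 * r) S' := by
    refine ⟨hS'ne, fun v hv => ?_⟩
    have hvS : v ∈ S := (mem_sdiff.mp hv).1
    have h1 := hSdef v hvS
    have h2 : (degIn G S v : ℤ) ≤ (degIn G S' v : ℤ) + r := by exact_mod_cast hbound1 v
    have h3 : (degIn G S'ᶜ v : ℤ) ≤ (degIn G Sᶜ v : ℤ) + r := by exact_mod_cast hbound2 v
    linarith
  refine ⟨⟨S', hS'def⟩, ?_⟩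
  have hle : defensiveAllianceNum G (k - 2 * r) ≤ S'.card :=
    Nat.sInf_le ⟨S', hS'def, rfl⟩
  have hk' : defensiveAllianceNum G k = S.card := by
    unfold defensiveAllianceNum
    exact hcard.symm
  omega
end

section
/- Let G be a finite simple graph of order n, maximum degree Δ and minimum degree δ, and let k be an integer with -δ ≤ k ≤ Δ. If G contains a defensive k-alliance, then ⌈(δ+k+2)/2⌉ ≤ a_k(G) ≤ n - ⌊(δ-k)/2⌋. -/
open Finset

variable {V : Type*}

lemma degIn_add_degIn_compl [Fintype V] [DecidableEq V] (G : SimpleGraph V)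
    [DecidableRel G.Adj] (S : Finset V) (v : V) :
    degIn G S v + degIn G Sᶜ v = G.degree v := by
  unfold degIn
  have h : G.neighborFinset v ∩ Sᶜ = G.neighborFinset v \ S := by
    ext x; simp [Finset.mem_sdiff]
  rw [h, Finset.card_inter_add_card_sdiff]
  rfl

/-- Theorem: for `-δ ≤ k ≤ Δ`, if `G` contains a defensive `k`-alliance then
`⌈(δ+k+2)/2⌉ ≤ a_k(G) ≤ n - ⌊(δ-k)/2⌋`. -/
theorem defensiveAllianceNum_bounds [Fintype V] [DecidableEq V] [Nonempty V]
    (G : SimpleGraph V) [DecidableRel G.Adj] (k : ℤ)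
    (hk1 : -(G.minDegree : ℤ) ≤ k) (hk2 : k ≤ (G.maxDegree : ℤ))
    (hex : ∃ S : Finset V, IsDefensiveKAlliance G k S) :
    ⌈((G.minDegree : ℚ) + (k : ℚ) + 2) / 2⌉ ≤ (defensiveAllianceNum G k : ℤ) ∧
      (defensiveAllianceNum G k : ℤ) ≤
        (Fintype.card V : ℤ) - ⌊((G.minDegree : ℚ) - (k : ℚ)) / 2⌋ := by
  set δ : ℤ := (G.minDegree : ℤ) with hδ
  have hne : {m : ℕ | ∃ S : Finset V, IsDefensiveKAlliance G k S ∧ S.card = m}.Nonempty := by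
    obtain ⟨S, hS⟩ := hex
    exact ⟨S.card, S, hS, rfl⟩
  -- floor/ceil rewrites
  have hceil : ⌈((G.minDegree : ℚ) + (k : ℚ) + 2) / 2⌉ = -((-(δ + k + 2)) / 2) := by
    have h : -(((G.minDegree : ℚ) + (k : ℚ) + 2) / 2) = ((-(δ + k + 2) : ℤ) : ℚ) / ((2 : ℕ) : ℚ) := by
      push_cast [hδ]; ring
    have h2 := Int.floor_neg (R := ℚ) (a := ((G.minDegree : ℚ) + (k : ℚ) + 2) / 2)
    rw [h, Rat.floor_intCast_div_natCast] at h2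
    omega
  have hfloor : ⌊((G.minDegree : ℚ) - (k : ℚ)) / 2⌋ = (δ - k) / 2 := by
    have : ((G.minDegree : ℚ) - (k : ℚ)) / 2 = ((δ - k : ℤ) : ℚ) / ((2 : ℕ) : ℚ) := by
      push_cast [hδ]; ring
    rw [this, Rat.floor_intCast_div_natCast]; norm_num
  constructor
  · -- lower bound
    obtain ⟨S, hS, hcard⟩ := Nat.sInf_mem hne
    obtain ⟨⟨v, hv⟩, hall⟩ := hS
    have h1 := hall v hv
    have h2 := degIn_add_degIn_compl G S v
    have h3 : G.minDegree ≤ G.degree v := G.minDegree_le_degree v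
    have h4 : degIn G S v ≤ S.card - 1 := by
      have hsub : G.neighborFinset v ∩ S ⊆ S.erase v := by
        intro x hx
        simp only [Finset.mem_inter, SimpleGraph.mem_neighborFinset] at hx
        exact Finset.mem_erase.2 ⟨fun h => G.loopless.irrefl v (h ▸ hx.1), hx.2⟩
      calc degIn G S v ≤ (S.erase v).card := Finset.card_le_card hsub
        _ = S.card - 1 := Finset.card_erase_of_mem hv
    have h5 : 1 ≤ S.card := Finset.card_pos.2 ⟨v, hv⟩
    rw [hceil]
    unfold defensiveAllianceNum
    rw [← hcard]
    omega
  · -- upper bound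
    rw [hfloor]
    set t : ℤ := (δ - k) / 2 with ht
    by_cases htpos : 0 < t
    · have hδn : δ ≤ (Fintype.card V : ℤ) - 1 := by
        have := G.degree_lt_card_verts (Classical.arbitrary V)
        have := G.minDegree_le_degree (Classical.arbitrary V)
        omega
      have htδ : t ≤ δ := by omega
      have htn : t.toNat ≤ Fintype.card V := by omega
      obtain ⟨X, _, hXcard⟩ := Finset.exists_subset_card_eq
        (s := (Finset.univ : Finset V)) (n := t.toNat) (by simpa using htn)
      have hAll : IsDefensiveKAlliance G k Xᶜ := by
        constructor
        · rw [← Finset.card_pos, Finset.card_compl, hXcard]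
          omega
        · intro v hv
          have h2 := degIn_add_degIn_compl G Xᶜ v
          have h3 : G.minDegree ≤ G.degree v := G.minDegree_le_degree v
          have h4 : degIn G Xᶜᶜ v ≤ t.toNat := by
            rw [compl_compl]
            calc degIn G X v ≤ X.card := Finset.card_le_card (Finset.inter_subset_right)
              _ = t.toNat := hXcard
          omega
      have hle : defensiveAllianceNum G k ≤ Xᶜ.card :=
        Nat.sInf_le ⟨Xᶜ, hAll, rfl⟩
      have : Xᶜ.card = Fintype.card V - t.toNat := by
        rw [Finset.card_compl, hXcard]
      omega
    · -- t ≤ 0 : trivial bound a ≤ n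
      obtain ⟨S, hS⟩ := hex
      have hle : defensiveAllianceNum G k ≤ S.card := Nat.sInf_le ⟨S, hS, rfl⟩
      have : S.card ≤ Fintype.card V := Finset.card_le_card (Finset.subset_univ S) |>.trans
        (by simp)
      omega
end

section
/- Let G be a finite simple graph of order n and minimum degree δ, and let k be an integer with -δ ≤ k ≤ 0. Then G contains a defensive k-alliance and a_k(G) ≤ ⌈(n+k+1)/2⌉. -/
open Finset

variable {V : Type*}

section Aux

variable [Fintype V] [DecidableEq V] (G : SimpleGraph V) [DecidableRel G.Adj]

lemma degIn_insert (a : V) (S : Finset V) (h : a ∉ S) (w : V) :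
    degIn G (insert a S) w = degIn G S w + if G.Adj w a then 1 else 0 := by
  unfold degIn
  by_cases hadj : G.Adj w a
  · have ha : a ∈ G.neighborFinset w := by
      rw [SimpleGraph.mem_neighborFinset]; exact hadj
    rw [Finset.inter_insert_of_mem ha, Finset.card_insert_of_notMem (by simp [h]), if_pos hadj]
  · have ha : a ∉ G.neighborFinset w := by
      rw [SimpleGraph.mem_neighborFinset]; exact hadj
    rw [Finset.inter_insert_of_notMem ha, if_neg hadj, add_zero]

lemma degIn_eq_erase (a : V) (S : Finset V) (h : a ∈ S) (w : V) :
    degIn G S w = degIn G (S.erase a) w + if G.Adj w a then 1 else 0 := by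
  conv_lhs => rw [← Finset.insert_erase h]
  exact degIn_insert G a (S.erase a) (Finset.notMem_erase a S) w

lemma degIn_erase_self (v : V) (S : Finset V) :
    degIn G (S.erase v) v = degIn G S v := by
  unfold degIn
  congr 1
  ext w
  simp only [Finset.mem_inter, Finset.mem_erase, SimpleGraph.mem_neighborFinset]
  constructor
  · rintro ⟨h1, _, h3⟩; exact ⟨h1, h3⟩
  · rintro ⟨h1, h2⟩; exact ⟨h1, fun hw => G.ne_of_adj h1 hw.symm, h2⟩

lemma degIn_add_compl (v : V) (S : Finset V) :
    degIn G S v + degIn G Sᶜ v = G.degree v := by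
  unfold degIn
  have h := Finset.card_inter_add_card_sdiff (G.neighborFinset v) S
  have h' : G.neighborFinset v \ S = G.neighborFinset v ∩ Sᶜ := by
    ext w; simp [Finset.mem_sdiff]
  rw [h'] at h
  rw [← SimpleGraph.card_neighborFinset_eq_degree]
  exact h

lemma sum_ite_adj (S : Finset V) (v : V) :
    (∑ w ∈ S, if G.Adj w v then (1 : ℤ) else 0) = degIn G S v := by
  rw [Finset.sum_boole]
  norm_cast
  unfold degIn
  congr 1
  ext w
  simp only [Finset.mem_filter, Finset.mem_inter, SimpleGraph.mem_neighborFinset]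
  rw [G.adj_comm]
  tauto

/-- The (integer-valued) size of the edge cut of `A`. -/
def cutZ (A : Finset V) : ℤ := ∑ v ∈ A, (degIn G Aᶜ v : ℤ)

lemma cut_erase (v : V) (A : Finset V) (h : v ∈ A) :
    cutZ G (A.erase v) = cutZ G A - degIn G Aᶜ v + degIn G A v := by
  unfold cutZ
  have hc : (A.erase v)ᶜ = insert v Aᶜ := by
    ext w
    simp only [Finset.mem_compl, Finset.mem_erase, Finset.mem_insert]
    by_cases hw : w = v <;> simp [hw, h]
  have hv : v ∉ Aᶜ := by simp [h]
  calc ∑ w ∈ A.erase v, (degIn G (A.erase v)ᶜ w : ℤ)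
      = ∑ w ∈ A.erase v, ((degIn G Aᶜ w : ℤ) + if G.Adj w v then 1 else 0) := by
        apply Finset.sum_congr rfl
        intro w _
        rw [hc, degIn_insert G v Aᶜ hv w]
        push_cast
        ring
    _ = (∑ w ∈ A.erase v, (degIn G Aᶜ w : ℤ)) + (degIn G (A.erase v) v : ℤ) := by
        rw [Finset.sum_add_distrib, sum_ite_adj]
    _ = cutZ G A - degIn G Aᶜ v + degIn G A v := by
        rw [degIn_erase_self]
        unfold cutZ
        rw [← Finset.add_sum_erase _ _ h]
        ring

lemma cut_insert (u : V) (A : Finset V) (h : u ∉ A) :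
    cutZ G (insert u A) = cutZ G A + G.degree u - 2 * degIn G A u := by
  unfold cutZ
  have hc : (insert u A)ᶜ = Aᶜ.erase u := by
    ext w
    simp only [Finset.mem_compl, Finset.mem_insert, Finset.mem_erase]
    tauto
  have hu : u ∈ Aᶜ := by simp [h]
  rw [Finset.sum_insert h]
  have h1 : (degIn G (insert u A)ᶜ u : ℤ) = (G.degree u : ℤ) - degIn G A u := by
    rw [hc, degIn_erase_self]
    have := degIn_add_compl G u A
    omega
  have h2 : ∀ w ∈ A, (degIn G (insert u A)ᶜ w : ℤ)
      = (degIn G Aᶜ w : ℤ) - if G.Adj w u then 1 else 0 := by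
    intro w _
    rw [hc]
    have := degIn_eq_erase G u Aᶜ hu w
    by_cases hadj : G.Adj w u <;> simp [hadj] at this ⊢ <;> omega
  rw [Finset.sum_congr rfl h2, Finset.sum_sub_distrib, sum_ite_adj, h1]
  ring

/-- Shrinking lemma: a set all of whose vertices have margin at least `k + 2r` stays a
defensive `k`-alliance after removing at most `r` vertices. -/
lemma shrink (k r : ℤ) (T T' : Finset V) (hsub : T' ⊆ T) (hne : T'.Nonempty)
    (hcard : (T.card : ℤ) - T'.card ≤ r)
    (hm : ∀ v ∈ T, k + 2 * r ≤ (degIn G T v : ℤ) - degIn G Tᶜ v) :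
    IsDefensiveKAlliance G k T' := by
  refine ⟨hne, fun v hv => ?_⟩
  have hvT : v ∈ T := hsub hv
  have hd : (T \ T').card = T.card - T'.card := Finset.card_sdiff_of_subset hsub
  have h1 : degIn G T v ≤ degIn G T' v + (T \ T').card := by
    have hss : G.neighborFinset v ∩ T ⊆ (G.neighborFinset v ∩ T') ∪ (T \ T') := by
      intro w hw
      simp only [Finset.mem_inter, Finset.mem_union, Finset.mem_sdiff] at hw ⊢
      by_cases hwT' : w ∈ T'
      · exact Or.inl ⟨hw.1, hwT'⟩
      · exact Or.inr ⟨hw.2, hwT'⟩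
    calc degIn G T v ≤ ((G.neighborFinset v ∩ T') ∪ (T \ T')).card := Finset.card_le_card hss
      _ ≤ degIn G T' v + (T \ T').card := Finset.card_union_le _ _
  have h2 : degIn G T'ᶜ v ≤ degIn G Tᶜ v + (T \ T').card := by
    have hss : G.neighborFinset v ∩ T'ᶜ ⊆ (G.neighborFinset v ∩ Tᶜ) ∪ (T \ T') := by
      intro w hw
      simp only [Finset.mem_inter, Finset.mem_compl, Finset.mem_union, Finset.mem_sdiff] at hw ⊢
      by_cases hwT : w ∈ T
      · exact Or.inr ⟨hwT, hw.2⟩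
      · exact Or.inl ⟨hw.1, hwT⟩
    calc degIn G T'ᶜ v ≤ ((G.neighborFinset v ∩ Tᶜ) ∪ (T \ T')).card := Finset.card_le_card hss
      _ ≤ degIn G Tᶜ v + (T \ T').card := Finset.card_union_le _ _
  have hTT' : T'.card ≤ T.card := Finset.card_le_card hsub
  have hmv := hm v hvT
  omega

end Aux

/-- Theorem: for `-δ ≤ k ≤ 0`, `G` contains a defensive `k`-alliance and
`a_k(G) ≤ ⌈(n+k+1)/2⌉`. -/
theorem defensiveAllianceNum_le_of_nonpos [Fintype V] [DecidableEq V] [Nonempty V]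
    (G : SimpleGraph V) [DecidableRel G.Adj] (k : ℤ)
    (hk1 : -(G.minDegree : ℤ) ≤ k) (hk2 : k ≤ 0) :
    (∃ S : Finset V, IsDefensiveKAlliance G k S) ∧
      (defensiveAllianceNum G k : ℤ) ≤ ⌈((Fintype.card V : ℚ) + (k : ℚ) + 1) / 2⌉ := by
  classical
  set n : ℕ := Fintype.card V with hn
  set M : ℤ := ⌈((n : ℚ) + (k : ℚ) + 1) / 2⌉ with hMdef
  -- 2M ≥ n + k + 1
  have h2M : (n : ℤ) + k + 1 ≤ 2 * M := by
    have h := Int.le_ceil (((n : ℚ) + (k : ℚ) + 1) / 2)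
    have h' : ((n : ℚ) + (k : ℚ) + 1) ≤ 2 * (M : ℚ) := by
      rw [div_le_iff₀ (by norm_num : (0:ℚ) < 2)] at h
      linarith
    exact_mod_cast h'
  -- min degree ≤ n - 1
  have hδ : (G.minDegree : ℤ) ≤ (n : ℤ) - 1 := by
    obtain ⟨v⟩ := (inferInstance : Nonempty V)
    have h1 : G.minDegree ≤ G.degree v := G.minDegree_le_degree v
    have h2 : G.degree v < n := G.degree_lt_card_verts v
    omega
  have hM1 : 1 ≤ M := by omega
  have hn1 : 1 ≤ n := Fintype.card_pos
  set mN : ℕ := M.toNat with hmN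
  have hmNM : (mN : ℤ) = M := Int.toNat_of_nonneg (by omega)
  -- univ is always a defensive k-alliance (since k ≤ 0)
  have huniv : IsDefensiveKAlliance G k (univ : Finset V) := by
    refine ⟨Finset.univ_nonempty, fun v _ => ?_⟩
    have hc : (univ : Finset V)ᶜ = ∅ := Finset.compl_univ
    rw [hc]
    have h0 : degIn G (∅ : Finset V) v = 0 := by
      unfold degIn; simp
    rw [h0]
    have : (0 : ℤ) ≤ (degIn G (univ : Finset V) v : ℤ) := by positivity
    omega
  -- Main claim: there is an alliance of size ≤ mN
  have main : ∃ S : Finset V, IsDefensiveKAlliance G k S ∧ S.card ≤ mN := by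
    by_cases hcase : n ≤ mN
    · exact ⟨univ, huniv, by rw [Finset.card_univ]; exact hcase⟩
    push_neg at hcase  -- mN < n
    set p : ℕ := (n + 1) / 2 with hp
    have hpn : p ≤ n := by omega
    -- choose A of size p minimizing the cut
    have hne : (Finset.powersetCard p (univ : Finset V)).Nonempty := by
      obtain ⟨t, ht, htc⟩ := Finset.exists_subset_card_eq
        (show p ≤ (univ : Finset V).card by rw [Finset.card_univ]; exact hpn)
      exact ⟨t, Finset.mem_powersetCard.mpr ⟨ht, htc⟩⟩
    obtain ⟨A, hAmem, hAmin⟩ := Finset.exists_min_image _ (cutZ G) hne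
    have hAcard : A.card = p := (Finset.mem_powersetCard.mp hAmem).2
    set q : ℕ := n - p with hq
    set τ : ℕ := p - mN with hτ
    set r₂ : ℕ := (q + 1) - mN with hr₂
    by_cases hcase1 : ∀ v ∈ A, k + 2 * (τ : ℤ) ≤ (degIn G A v : ℤ) - degIn G Aᶜ v
    · -- Case 1: shrink A
      obtain ⟨T', hT'sub, hT'card⟩ := Finset.exists_subset_card_eq
        (show p - τ ≤ A.card by rw [hAcard]; omega)
      have hT'ne : T'.Nonempty := by
        rw [← Finset.card_pos, hT'card]; omega
      refine ⟨T', shrink G k (τ : ℤ) A T' hT'sub hT'ne ?_ hcase1, ?_⟩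
      · rw [hAcard, hT'card]; push_cast; omega
      · rw [hT'card]; omega
    · -- Case 2: some vertex of A is bad; take Aᶜ ∪ {v₀} and shrink it
      push_neg at hcase1
      obtain ⟨v₀, hv₀A, hv₀bad⟩ := hcase1
      have hv₀bad' : (degIn G A v₀ : ℤ) - degIn G Aᶜ v₀ ≤ k + 2 * (τ : ℤ) - 1 := by omega
      have hv₀c : v₀ ∉ Aᶜ := by simp [hv₀A]
      -- swap inequality: for all u ∈ Aᶜ
      have hswap : ∀ u ∈ Aᶜ, (1 : ℤ) - k - 2 * (τ : ℤ) ≤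
          (degIn G Aᶜ u : ℤ) - degIn G A u + 2 * (if G.Adj u v₀ then 1 else 0) := by
        intro u hu
        have huA : u ∉ A := Finset.mem_compl.mp hu
        have huA' : u ∉ A.erase v₀ := fun h => huA (Finset.mem_of_mem_erase h)
        have hA'card : (insert u (A.erase v₀)).card = p := by
          rw [Finset.card_insert_of_notMem huA', Finset.card_erase_of_mem hv₀A, hAcard]
          have hApos : 0 < A.card := Finset.card_pos.mpr ⟨v₀, hv₀A⟩
          rw [hAcard] at hApos
          omega
        have hA'mem : insert u (A.erase v₀) ∈ Finset.powersetCard p (univ : Finset V) :=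
          Finset.mem_powersetCard.mpr ⟨Finset.subset_univ _, hA'card⟩
        have hmin := hAmin _ hA'mem
        have he : cutZ G (A.erase v₀) = cutZ G A - degIn G Aᶜ v₀ + degIn G A v₀ :=
          cut_erase G v₀ A hv₀A
        have hi : cutZ G (insert u (A.erase v₀)) =
            cutZ G (A.erase v₀) + G.degree u - 2 * degIn G (A.erase v₀) u :=
          cut_insert G u (A.erase v₀) huA'
        have hdeg : (degIn G A u : ℤ) + degIn G Aᶜ u = G.degree u := by
          have := degIn_add_compl G u A; omega
        have herase := degIn_eq_erase G v₀ A hv₀A u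
        by_cases hadj : G.Adj u v₀
        · rw [if_pos hadj] at herase ⊢
          omega
        · rw [if_neg hadj] at herase ⊢
          omega
      have hTcard : (insert v₀ Aᶜ).card = q + 1 := by
        rw [Finset.card_insert_of_notMem hv₀c, Finset.card_compl, hAcard]
      have hTc : (insert v₀ Aᶜ)ᶜ = A.erase v₀ := by
        ext w
        simp only [Finset.mem_compl, Finset.mem_insert, Finset.mem_erase]
        by_cases hw : w = v₀ <;> simp [hw, hv₀A]
      -- margin for every vertex of insert v₀ Aᶜ
      have hmargin : ∀ w ∈ insert v₀ Aᶜ, k + 2 * (r₂ : ℤ) ≤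
          (degIn G (insert v₀ Aᶜ) w : ℤ) - degIn G (insert v₀ Aᶜ)ᶜ w := by
        have harith : k + 2 * (r₂ : ℤ) ≤ 1 - k - 2 * (τ : ℤ) := by omega
        intro w hw
        rcases Finset.mem_insert.mp hw with hwv | hwc
        · subst hwv
          have h1 : degIn G (insert w Aᶜ) w = degIn G Aᶜ w := by
            have h := degIn_insert G w Aᶜ hv₀c w
            simp only [SimpleGraph.irrefl, if_false, add_zero] at h
            exact h
          have h2 : degIn G (insert w Aᶜ)ᶜ w = degIn G A w := by
            rw [hTc]; exact degIn_erase_self G w A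
          rw [h1, h2]
          omega
        · have h1 := degIn_insert G v₀ Aᶜ hv₀c w
          have h2 : (degIn G (insert v₀ Aᶜ)ᶜ w : ℤ)
              = (degIn G A w : ℤ) - if G.Adj w v₀ then 1 else 0 := by
            rw [hTc]
            have := degIn_eq_erase G v₀ A hv₀A w
            by_cases hadj : G.Adj w v₀ <;> simp only [hadj, if_true, if_false] at this ⊢ <;>
              omega
          have hs := hswap w hwc
          have hadjc : G.Adj w v₀ ↔ G.Adj v₀ w := G.adj_comm w v₀
          by_cases hadj : G.Adj w v₀
          · simp only [hadj, if_true] at h1 h2 ⊢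
            simp only [hadj, if_true] at hs
            omega
          · simp only [hadj, if_false] at h1 h2 ⊢
            simp only [hadj, if_false] at hs
            omega
      obtain ⟨T', hT'sub, hT'card⟩ := Finset.exists_subset_card_eq
        (show (q + 1) - r₂ ≤ (insert v₀ Aᶜ).card by rw [hTcard]; omega)
      have hT'ne : T'.Nonempty := by
        rw [← Finset.card_pos, hT'card]; omega
      refine ⟨T', shrink G k (r₂ : ℤ) (insert v₀ Aᶜ) T' hT'sub hT'ne ?_ hmargin, ?_⟩
      · rw [hTcard, hT'card]; push_cast; omega
      · rw [hT'card]; omega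
  obtain ⟨S, hS, hScard⟩ := main
  constructor
  · exact ⟨S, hS⟩
  · have hmem : S.card ∈ {m : ℕ | ∃ S : Finset V, IsDefensiveKAlliance G k S ∧ S.card = m} :=
      ⟨S, hS, rfl⟩
    have hinf : defensiveAllianceNum G k ≤ S.card := Nat.sInf_le hmem
    have hc : (defensiveAllianceNum G k : ℤ) ≤ (S.card : ℤ) := by exact_mod_cast hinf
    omega
end

section
/- Let G be a finite simple graph of order n, maximum degree Δ and minimum degree δ, and let k be an integer with -Δ ≤ k ≤ Δ. If G contains a global defensive k-alliance, then (√(4n+k²)+k)/2 ≤ γ_k^d(G) ≤ n - ⌊(δ-k)/2⌋. -/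
open Finset

variable {V : Type*}

lemma degIn_le_card [Fintype V] [DecidableEq V] (G : SimpleGraph V) [DecidableRel G.Adj]
    (S : Finset V) (v : V) : degIn G S v ≤ S.card :=
  Finset.card_le_card (Finset.inter_subset_right)

lemma degIn_lt_card [Fintype V] [DecidableEq V] (G : SimpleGraph V) [DecidableRel G.Adj]
    {S : Finset V} {v : V} (hv : v ∈ S) : degIn G S v + 1 ≤ S.card := by
  have hsub : G.neighborFinset v ∩ S ⊆ S.erase v := by
    intro x hx
    simp only [Finset.mem_inter, SimpleGraph.mem_neighborFinset] at hx
    exact Finset.mem_erase.2 ⟨fun h => G.loopless.irrefl v (h ▸ hx.1), hx.2⟩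
  have := Finset.card_le_card hsub
  rw [Finset.card_erase_of_mem hv] at this
  have hc : 1 ≤ S.card := Finset.card_pos.2 ⟨v, hv⟩
  have hd : degIn G S v = (G.neighborFinset v ∩ S).card := rfl
  omega

lemma degIn_sum_comm [Fintype V] [DecidableEq V] (G : SimpleGraph V) [DecidableRel G.Adj]
    (A B : Finset V) : ∑ v ∈ A, degIn G B v = ∑ u ∈ B, degIn G A u := by
  have h : ∀ (C D : Finset V) (v : V), degIn G D v = ∑ u ∈ D, if G.Adj v u then 1 else 0 := by
    intro C D v
    unfold degIn
    rw [show G.neighborFinset v ∩ D = D.filter (fun u => G.Adj v u) by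
      ext x; simp [and_comm], Finset.card_filter]
  simp only [h A B, h B A]
  rw [Finset.sum_comm]
  congr 1; ext u; congr 1; ext v
  simp [G.adj_comm]

/-- `S` is a dominating set: every vertex outside `S` has a neighbor in `S`. -/
def IsDominatingSet (G : SimpleGraph V) (S : Finset V) : Prop :=
  ∀ v, v ∉ S → ∃ u ∈ S, G.Adj u v

/-- A global defensive `k`-alliance is a defensive `k`-alliance which is also dominating. -/
def IsGlobalDefensiveKAlliance [Fintype V] [DecidableEq V] (G : SimpleGraph V)
    [DecidableRel G.Adj] (k : ℤ) (S : Finset V) : Prop :=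
  IsDefensiveKAlliance G k S ∧ IsDominatingSet G S

/-- The global defensive `k`-alliance number `γ_k^d(G)`. -/
noncomputable def globalDefensiveAllianceNum [Fintype V] [DecidableEq V] (G : SimpleGraph V)
    [DecidableRel G.Adj] (k : ℤ) : ℕ :=
  sInf {m : ℕ | ∃ S : Finset V, IsGlobalDefensiveKAlliance G k S ∧ S.card = m}

/-- Theorem: for `-Δ ≤ k ≤ Δ`, if `G` contains a global defensive `k`-alliance then
`(√(4n+k²)+k)/2 ≤ γ_k^d(G) ≤ n - ⌊(δ-k)/2⌋`. -/
theorem globalDefensiveAllianceNum_bounds [Fintype V] [DecidableEq V] [Nonempty V]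
    (G : SimpleGraph V) [DecidableRel G.Adj] (k : ℤ)
    (hk1 : -(G.maxDegree : ℤ) ≤ k) (hk2 : k ≤ (G.maxDegree : ℤ))
    (hex : ∃ S : Finset V, IsGlobalDefensiveKAlliance G k S) :
    (Real.sqrt (4 * (Fintype.card V : ℝ) + (k : ℝ) ^ 2) + (k : ℝ)) / 2 ≤
        (globalDefensiveAllianceNum G k : ℝ) ∧
      (globalDefensiveAllianceNum G k : ℤ) ≤
        (Fintype.card V : ℤ) - ⌊((G.minDegree : ℚ) - (k : ℚ)) / 2⌋ := by
  obtain ⟨S₀, hS₀⟩ := hex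
  set n := Fintype.card V with hn
  set γ := globalDefensiveAllianceNum G k with hγ
  have hmem : γ ∈ {m : ℕ | ∃ S : Finset V, IsGlobalDefensiveKAlliance G k S ∧ S.card = m} :=
    Nat.sInf_mem ⟨S₀.card, S₀, hS₀, rfl⟩
  obtain ⟨S, hS, hcard⟩ := hmem
  obtain ⟨⟨hSne, hdef⟩, hdom⟩ := hS
  constructor
  · -- lower bound
    -- key inequality: n ≤ γ² - kγ over ℤ
    have hγ1 : 1 ≤ γ := hcard ▸ Finset.card_pos.2 hSne
    have hkγ : k + 1 ≤ (γ : ℤ) := by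
      obtain ⟨v, hv⟩ := hSne
      have h1 := hdef v hv
      have h2 := degIn_lt_card G hv
      rw [hcard] at h2
      have : (0 : ℤ) ≤ degIn G Sᶜ v := Int.ofNat_nonneg _
      omega
    have hdomsum : (Sᶜ.card : ℤ) ≤ ∑ v ∈ Sᶜ, (degIn G S v : ℤ) := by
      rw [Finset.card_eq_sum_ones, Nat.cast_sum]
      apply Finset.sum_le_sum
      intro v hv
      obtain ⟨u, hu, hadj⟩ := hdom v (Finset.mem_compl.1 hv)
      have : u ∈ G.neighborFinset v ∩ S := by
        simp [SimpleGraph.mem_neighborFinset, hadj.symm, hu]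
      have : 1 ≤ degIn G S v := Finset.card_pos.2 ⟨u, this⟩
      exact_mod_cast this
    have hswap : ∑ v ∈ Sᶜ, (degIn G S v : ℤ) = ∑ u ∈ S, (degIn G Sᶜ u : ℤ) := by
      rw [← Nat.cast_sum, ← Nat.cast_sum, degIn_sum_comm]
    have hbound : ∑ u ∈ S, (degIn G Sᶜ u : ℤ) ≤ ∑ u ∈ S, ((γ : ℤ) - 1 - k) := by
      apply Finset.sum_le_sum
      intro u hu
      have h1 := hdef u hu
      have h2 := degIn_lt_card G hu
      rw [hcard] at h2
      have h2' : (degIn G S u : ℤ) + 1 ≤ (γ : ℤ) := by exact_mod_cast h2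
      omega
    have hcompl : (Sᶜ.card : ℤ) = (n : ℤ) - (γ : ℤ) := by
      rw [Finset.card_compl, hcard]
      have : γ ≤ n := hcard ▸ Finset.card_le_univ S
      omega
    have hkey : (n : ℤ) ≤ (γ : ℤ) ^ 2 - k * γ := by
      have hsum : ∑ u ∈ S, ((γ : ℤ) - 1 - k) = (γ : ℤ) * ((γ : ℤ) - 1 - k) := by
        rw [Finset.sum_const, hcard]; ring
      rw [hcompl, hswap] at hdomsum
      rw [hsum] at hbound
      nlinarith [hdomsum.trans hbound]
    -- now over ℝ
    have hkeyR : 4 * (n : ℝ) + (k : ℝ) ^ 2 ≤ (2 * (γ : ℝ) - (k : ℝ)) ^ 2 := by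
      have : (n : ℝ) ≤ (γ : ℝ) ^ 2 - (k : ℝ) * (γ : ℝ) := by exact_mod_cast hkey
      nlinarith
    have hpos : (0 : ℝ) ≤ 2 * (γ : ℝ) - (k : ℝ) := by
      have : (k : ℝ) + 1 ≤ (γ : ℝ) := by exact_mod_cast hkγ
      have : (1 : ℝ) ≤ (γ : ℝ) := by exact_mod_cast hγ1
      nlinarith [hkγ]
    have := Real.sqrt_le_sqrt hkeyR
    rw [Real.sqrt_sq hpos] at this
    linarith
  · -- upper bound
    set t : ℤ := ⌊((G.minDegree : ℚ) - (k : ℚ)) / 2⌋ with ht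
    have h2t : 2 * t ≤ (G.minDegree : ℤ) - k := by
      have := Int.floor_le (((G.minDegree : ℚ) - (k : ℚ)) / 2)
      rw [← ht] at this
      have : (2 * t : ℚ) ≤ (G.minDegree : ℚ) - (k : ℚ) := by linarith
      exact_mod_cast this
    have hγn : γ ≤ n := hcard ▸ Finset.card_le_univ S
    rcases le_or_gt t 0 with htn | htp
    · have : (γ : ℤ) ≤ n := by exact_mod_cast hγn
      omega
    · -- t ≥ 1 : construct S = Xᶜ with X ⊆ N(w), |X| = t
      obtain ⟨w, hw⟩ := G.exists_maximal_degree_vertex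
      have hδΔ : (G.minDegree : ℤ) ≤ (G.maxDegree : ℤ) := by
        exact_mod_cast (G.minDegree_le_degree w).trans (G.degree_le_maxDegree w)
      have htΔ : t.toNat ≤ G.degree w := by
        have : t ≤ (G.maxDegree : ℤ) := by omega
        rw [hw] at this
        omega
      obtain ⟨X, hXsub, hXcard⟩ : ∃ X ⊆ G.neighborFinset w, X.card = t.toNat := by
        apply Finset.exists_subset_card_eq
        rwa [SimpleGraph.card_neighborFinset_eq_degree]
      have hwX : w ∉ X := fun h => G.loopless.irrefl w (SimpleGraph.mem_neighborFinset _ _ _ |>.1 (hXsub h))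
      have halli : IsGlobalDefensiveKAlliance G k Xᶜ := by
        refine ⟨⟨⟨w, Finset.mem_compl.2 hwX⟩, ?_⟩, ?_⟩
        · intro v hv
          rw [compl_compl]
          have hsum := degIn_add_degIn_compl G X v
          have hX : degIn G X v ≤ X.card := degIn_le_card G X v
          have hdeg : G.minDegree ≤ G.degree v := G.minDegree_le_degree v
          have h1 : (degIn G X v : ℤ) ≤ t := by
            rw [hXcard] at hX
            have : (degIn G X v : ℤ) ≤ t.toNat := by exact_mod_cast hX
            omega
          have h2 : (degIn G X v : ℤ) + (degIn G Xᶜ v : ℤ) = G.degree v := by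
            exact_mod_cast hsum
          have h3 : (G.minDegree : ℤ) ≤ G.degree v := by exact_mod_cast hdeg
          omega
        · intro v hv
          rw [Finset.mem_compl, not_not] at hv
          exact ⟨w, Finset.mem_compl.2 hwX, (SimpleGraph.mem_neighborFinset _ _ _).1 (hXsub hv)⟩
      have hle : γ ≤ Xᶜ.card := Nat.sInf_le ⟨Xᶜ, halli, rfl⟩
      have hXc : (Xᶜ.card : ℤ) = (n : ℤ) - t := by
        rw [Finset.card_compl, hXcard]
        have : t.toNat ≤ n := by
          calc t.toNat = X.card := hXcard.symm
          _ ≤ n := Finset.card_le_univ X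
        push_cast
        omega
      have : (γ : ℤ) ≤ (Xᶜ.card : ℤ) := by exact_mod_cast hle
      omega
end

section
/- Let G be a finite simple graph of order n and maximum degree Δ, and let k be an integer with -Δ ≤ k ≤ Δ. If G contains a global defensive k-alliance, then γ_k^d(G) ≥ ⌈ n / (⌊(Δ-k)/2⌋ + 1) ⌉. -/
open Finset

variable {V : Type*}

/-- Theorem: for `-Δ ≤ k ≤ Δ`, if `G` contains a global defensive `k`-alliance then
`γ_k^d(G) ≥ ⌈ n / (⌊(Δ-k)/2⌋ + 1) ⌉`. -/
theorem globalDefensiveAllianceNum_lower_bound [Fintype V] [DecidableEq V]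
    (G : SimpleGraph V) [DecidableRel G.Adj] (k : ℤ)
    (hk1 : -(G.maxDegree : ℤ) ≤ k) (hk2 : k ≤ (G.maxDegree : ℤ))
    (hex : ∃ S : Finset V, IsGlobalDefensiveKAlliance G k S) :
    ⌈(Fintype.card V : ℚ) / (((⌊((G.maxDegree : ℚ) - (k : ℚ)) / 2⌋ : ℤ) : ℚ) + 1)⌉ ≤
      (globalDefensiveAllianceNum G k : ℤ) := by
  classical
  set f : ℤ := ⌊((G.maxDegree : ℚ) - (k : ℚ)) / 2⌋ with hf
  have hf0 : 0 ≤ f := by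
    apply Int.le_floor.2
    have : (k : ℚ) ≤ (G.maxDegree : ℚ) := by exact_mod_cast hk2
    push_cast
    linarith
  -- get a minimizing set
  have hne : {m : ℕ | ∃ S : Finset V, IsGlobalDefensiveKAlliance G k S ∧ S.card = m}.Nonempty := by
    obtain ⟨S, hS⟩ := hex
    exact ⟨S.card, S, hS, rfl⟩
  have hmem := Nat.sInf_mem hne
  obtain ⟨S, hS, hcard⟩ := hmem
  obtain ⟨⟨hSne, hall⟩, hdom⟩ := hS
  -- each v ∈ S has degIn G Sᶜ v ≤ f
  have hbound : ∀ v ∈ S, (degIn G Sᶜ v : ℤ) ≤ f := by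
    intro v hv
    have h1 := hall v hv
    have hdeg : degIn G S v + degIn G Sᶜ v = G.degree v := by
      rw [degIn, degIn, ← Finset.card_union_of_disjoint]
      · rw [← Finset.inter_union_distrib_left, Finset.union_compl, Finset.inter_univ]
        rfl
      · exact Finset.disjoint_left.2 fun x hx hx' =>
          (Finset.mem_compl.1 (Finset.mem_inter.1 hx').2) (Finset.mem_inter.1 hx).2
    have hdle : G.degree v ≤ G.maxDegree := G.degree_le_maxDegree v
    apply Int.le_floor.2
    have : 2 * (degIn G Sᶜ v : ℤ) ≤ (G.maxDegree : ℤ) - k := by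
      have : (degIn G S v : ℤ) + (degIn G Sᶜ v : ℤ) ≤ (G.maxDegree : ℤ) := by
        exact_mod_cast hdeg ▸ Int.ofNat_le.2 hdle
      linarith
    have h2 : (2 : ℚ) * (degIn G Sᶜ v : ℚ) ≤ (G.maxDegree : ℚ) - (k : ℚ) := by
      exact_mod_cast this
    push_cast
    linarith
  -- double counting
  have hswap : ∑ v ∈ S, degIn G Sᶜ v = ∑ u ∈ Sᶜ, degIn G S u := by
    have : ∀ (A B : Finset V), ∑ v ∈ A, degIn G B v
        = ∑ v ∈ A, ∑ u ∈ B, (if G.Adj v u then 1 else 0) := by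
      intro A B
      refine Finset.sum_congr rfl fun v _ => ?_
      rw [degIn, Finset.sum_ite, Finset.sum_const, Finset.sum_const, smul_eq_mul, mul_one,
        smul_eq_mul, mul_zero, add_zero]
      congr 1
      ext u
      simp [SimpleGraph.mem_neighborFinset, and_comm]
    rw [this, this, Finset.sum_comm]
    refine Finset.sum_congr rfl fun u _ => Finset.sum_congr rfl fun v _ => ?_
    simp [SimpleGraph.adj_comm]
  have hdomsum : Sᶜ.card ≤ ∑ u ∈ Sᶜ, degIn G S u := by
    calc Sᶜ.card = ∑ _u ∈ Sᶜ, 1 := by simp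
    _ ≤ ∑ u ∈ Sᶜ, degIn G S u := by
      refine Finset.sum_le_sum fun u hu => ?_
      obtain ⟨w, hwS, hadj⟩ := hdom u (Finset.mem_compl.1 hu)
      have : w ∈ G.neighborFinset u ∩ S :=
        Finset.mem_inter.2 ⟨(SimpleGraph.mem_neighborFinset _ _ _).2 hadj.symm, hwS⟩
      exact Finset.card_pos.2 ⟨w, this⟩
  have hsum : (Sᶜ.card : ℤ) ≤ S.card * f := by
    have : (∑ v ∈ S, (degIn G Sᶜ v : ℤ)) ≤ ∑ _v ∈ S, f := Finset.sum_le_sum hbound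
    have h2 : (Sᶜ.card : ℤ) ≤ ∑ v ∈ S, (degIn G Sᶜ v : ℤ) := by
      rw [← Nat.cast_sum, hswap]
      exact_mod_cast hdomsum
    simpa using h2.trans this
  have hn : (Fintype.card V : ℤ) ≤ S.card * (f + 1) := by
    have : S.card + Sᶜ.card = Fintype.card V := Finset.card_add_card_compl S
    have h3 : (S.card : ℤ) + Sᶜ.card = Fintype.card V := by exact_mod_cast this
    linarith [hsum]
  rw [hcard] at *
  apply Int.ceil_le.2
  rw [div_le_iff₀]
  · have : ((Fintype.card V : ℤ) : ℚ) ≤ ((globalDefensiveAllianceNum G k * (f + 1) : ℤ) : ℚ) := by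
      exact_mod_cast hn
    push_cast at this ⊢
    linarith
  · have : (0 : ℤ) < f + 1 := by omega
    have : ((0 : ℤ) : ℚ) < ((f + 1 : ℤ) : ℚ) := by exact_mod_cast this
    push_cast at this
    linarith
end

section
/- Let T be a finite tree of order n ≥ 2 and let k be an integer with k ≤ 1. Then T contains a global defensive k-alliance and γ_k^d(T) ≥ ⌈(n+2)/(3-k)⌉. -/
open Finset

variable {V : Type*}

lemma degIn_eq_card_filter [Fintype V] [DecidableEq V] (G : SimpleGraph V) [DecidableRel G.Adj]
    (S : Finset V) (v : V) : degIn G S v = (S.filter (G.Adj v)).card := by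
  unfold degIn
  congr 1
  ext u
  simp [SimpleGraph.mem_neighborFinset, and_comm]

lemma sum_degIn_comm [Fintype V] [DecidableEq V] (G : SimpleGraph V) [DecidableRel G.Adj]
    (X Y : Finset V) : ∑ v ∈ X, degIn G Y v = ∑ u ∈ Y, degIn G X u := by
  simp only [degIn_eq_card_filter, Finset.card_filter]
  rw [Finset.sum_comm]
  refine Finset.sum_congr rfl fun u _ => Finset.sum_congr rfl fun v _ => ?_
  simp [G.adj_comm u v]

/-- The key counting bound for a global defensive `k`-alliance in a tree. -/
lemma card_bound_of_tree [Fintype V] [DecidableEq V] (G : SimpleGraph V) [DecidableRel G.Adj]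
    (hT : G.IsTree) (k : ℤ) (S : Finset V) (h : IsGlobalDefensiveKAlliance G k S) :
    (Fintype.card V : ℤ) + 2 ≤ (3 - k) * S.card := by
  obtain ⟨⟨_, hdef⟩, hdom⟩ := h
  set A := ∑ v ∈ S, degIn G Sᶜ v with hA
  set B := ∑ v ∈ S, degIn G S v with hB
  set C := ∑ v ∈ Sᶜ, degIn G Sᶜ v with hC
  -- total degree sum
  have hsum : B + A + (A + C) = 2 * G.edgeFinset.card := by
    rw [← G.sum_degrees_eq_twice_card_edges,
      ← Finset.sum_add_sum_compl S (fun v => G.degree v)]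
    have h1 : ∑ v ∈ S, G.degree v = B + A := by
      rw [hA, hB, ← Finset.sum_add_distrib]
      exact Finset.sum_congr rfl fun v _ => (degIn_add_degIn_compl G S v).symm
    have h2 : ∑ v ∈ Sᶜ, G.degree v = A + C := by
      rw [hA, hC, sum_degIn_comm G S Sᶜ, ← Finset.sum_add_distrib]
      exact Finset.sum_congr rfl fun v _ => (degIn_add_degIn_compl G S v).symm
    rw [h1, h2]
  have hm : (G.edgeFinset.card : ℤ) + 1 = Fintype.card V := by
    exact_mod_cast congrArg (Nat.cast : ℕ → ℤ) hT.card_edgeFinset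
  -- domination: A ≥ n - |S|
  have hdomA : Fintype.card V - S.card ≤ A := by
    rw [hA, sum_degIn_comm G S Sᶜ, ← Finset.card_compl]
    calc Sᶜ.card = ∑ _v ∈ Sᶜ, 1 := by simp
    _ ≤ ∑ v ∈ Sᶜ, degIn G S v := by
        refine Finset.sum_le_sum fun v hv => ?_
        obtain ⟨u, hu, hadj⟩ := hdom v (Finset.mem_compl.mp hv)
        refine Finset.card_pos.mpr ⟨u, ?_⟩
        simp [degIn, SimpleGraph.mem_neighborFinset, hu, hadj.symm]
  -- defense: A + k * |S| ≤ B
  have hdefB : (A : ℤ) + k * S.card ≤ B := by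
    have := Finset.sum_le_sum hdef
    rw [hA, hB]
    push_cast
    simpa [Finset.sum_add_distrib, mul_comm] using this
  -- combine
  have hsZ : (B : ℤ) + A + (A + C) = 2 * G.edgeFinset.card := by exact_mod_cast hsum
  have hdomZ : (Fintype.card V : ℤ) - S.card ≤ A := by
    have hle : S.card ≤ Fintype.card V := Finset.card_le_univ S
    have := (Nat.cast_le (α := ℤ)).mpr hdomA
    push_cast at this
    omega
  have hCnn : (0 : ℤ) ≤ C := by positivity
  linarith

/-- Theorem: a tree `T` of order `n ≥ 2` contains a global defensive `k`-alliance for every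
`k ≤ 1`, and `γ_k^d(T) ≥ ⌈(n+2)/(3-k)⌉`. -/
theorem tree_globalDefensiveAllianceNum_lower_bound [Fintype V] [DecidableEq V]
    (G : SimpleGraph V) [DecidableRel G.Adj] (hT : G.IsTree) (hn : 2 ≤ Fintype.card V)
    (k : ℤ) (hk : k ≤ 1) :
    (∃ S : Finset V, IsGlobalDefensiveKAlliance G k S) ∧
      ⌈((Fintype.card V : ℚ) + 2) / (3 - (k : ℚ))⌉ ≤ (globalDefensiveAllianceNum G k : ℤ) := by
  have hNe : Nonempty V := Fintype.card_pos_iff.mp (by omega)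
  -- every vertex has a neighbor
  have hdeg : ∀ v : V, 1 ≤ G.degree v := by
    intro v
    obtain ⟨u, hu⟩ := Fintype.exists_ne_of_one_lt_card (by omega) v
    obtain ⟨w⟩ := hT.isConnected.preconnected v u
    have hnil : ¬ w.Nil := SimpleGraph.Walk.not_nil_of_ne (Ne.symm hu)
    have hadj := w.adj_snd hnil
    rw [← SimpleGraph.card_neighborFinset_eq_degree]
    exact Finset.card_pos.mpr ⟨_, (SimpleGraph.mem_neighborFinset G v _).mpr hadj⟩
  -- univ is a global defensive k-alliance
  have huniv : IsGlobalDefensiveKAlliance G k Finset.univ := by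
    refine ⟨⟨Finset.univ_nonempty, fun v _ => ?_⟩, fun v hv => absurd (Finset.mem_univ v) hv⟩
    have h1 : degIn G (Finset.univᶜ) v = 0 := by simp [degIn]
    have h2 : degIn G Finset.univ v = G.degree v := by
      simp [degIn, SimpleGraph.card_neighborFinset_eq_degree]
    rw [h1, h2]
    have := hdeg v
    push_cast
    omega
  refine ⟨⟨Finset.univ, huniv⟩, ?_⟩
  have hne : {m : ℕ | ∃ S : Finset V, IsGlobalDefensiveKAlliance G k S ∧ S.card = m}.Nonempty :=
    ⟨Finset.univ.card, Finset.univ, huniv, rfl⟩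
  obtain ⟨S, hS, hcard⟩ := Nat.sInf_mem hne
  have hbound := card_bound_of_tree G hT k S hS
  have hk3 : (0 : ℚ) < 3 - (k : ℚ) := by
    have : (k : ℚ) ≤ 1 := by exact_mod_cast hk
    linarith
  rw [Int.ceil_le, div_le_iff₀ hk3]
  have : ((Fintype.card V : ℤ) : ℚ) + 2 ≤ ((3 - k : ℤ) : ℚ) * ((S.card : ℤ) : ℚ) := by
    exact_mod_cast hbound
  push_cast at this ⊢
  rw [globalDefensiveAllianceNum, ← hcard]
  linarith
end

section
/- For any finite tree T (of order at least 2), γ_{-1}^d(T) ≤ β_0(T), where β_0(T) is the independence number of T. -/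
open Finset

variable {V : Type*}

/-- The independence number `β₀(G)`: maximum cardinality of a set of pairwise
nonadjacent vertices. -/
noncomputable def independenceNum [Fintype V] (G : SimpleGraph V) : ℕ :=
  sSup {m : ℕ | ∃ S : Finset V, (∀ u ∈ S, ∀ v ∈ S, u ≠ v → ¬ G.Adj u v) ∧ S.card = m}

universe u

section basic
variable [Fintype V] [DecidableEq V] {G : SimpleGraph V} [DecidableRel G.Adj]

lemma degIn_add_degIn (S : Finset V) (v : V) :
    degIn G S v + degIn G Sᶜ v = G.degree v := by
  classical
  rw [degIn, degIn, ← SimpleGraph.card_neighborFinset_eq_degree]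
  have : G.neighborFinset v ∩ Sᶜ = G.neighborFinset v \ S := by
    ext y; simp [Finset.mem_compl, Finset.mem_sdiff, and_comm]
  rw [this, Finset.card_inter_add_card_sdiff]

end basic

section tree
variable {G : SimpleGraph V} {r : V}

lemma tree_path_length (hT : G.IsTree) {a b : V} (p : G.Walk a b) (hp : p.IsPath) :
    p.length = G.dist a b := by
  classical
  obtain ⟨q, hq, hql⟩ := SimpleGraph.Connected.exists_path_of_dist hT.isConnected a b
  have := hT.IsAcyclic.path_unique ⟨p, hp⟩ ⟨q, hq⟩
  rw [Subtype.mk.injEq] at this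
  rw [this, hql]

lemma tree_adj_dist (hT : G.IsTree) {u y : V} (h : G.Adj u y) :
    G.dist r y = G.dist r u + 1 ∨ G.dist r u = G.dist r y + 1 := by
  classical
  obtain ⟨p, hp, hpl⟩ := SimpleGraph.Connected.exists_path_of_dist hT.isConnected r y
  by_cases hu : u ∈ p.support
  · left
    have ht : (p.takeUntil u hu).length = G.dist r u := tree_path_length hT _ (hp.takeUntil hu)
    have hd : (p.dropUntil u hu).length = 1 := by
      have hdp : (p.dropUntil u hu).IsPath := hp.dropUntil hu
      have h1 : (SimpleGraph.Walk.cons h (SimpleGraph.Walk.nil)).IsPath := by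
        simp [SimpleGraph.Walk.isPath_def, h.ne]
      have := hT.IsAcyclic.path_unique ⟨p.dropUntil u hu, hdp⟩ ⟨_, h1⟩
      rw [Subtype.mk.injEq] at this
      rw [this]; rfl
    have := SimpleGraph.Walk.take_spec p hu
    have hlen := congrArg SimpleGraph.Walk.length this
    rw [SimpleGraph.Walk.length_append, ht, hd] at hlen
    omega
  · right
    have hcp : (p.concat h.symm).IsPath := by
      rw [← SimpleGraph.Walk.isPath_reverse_iff, SimpleGraph.Walk.reverse_concat]
      exact SimpleGraph.Walk.IsPath.cons (hp.reverse) (by simpa using hu)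
    have := tree_path_length hT _ hcp
    rw [SimpleGraph.Walk.length_concat, hpl] at this
    omega

lemma tree_exists_parent (hT : G.IsTree) {v : V} (h : G.dist r v ≠ 0) :
    ∃ w, G.Adj v w ∧ G.dist r w + 1 = G.dist r v := by
  obtain ⟨p, hp, hpl⟩ := SimpleGraph.Connected.exists_path_of_dist hT.isConnected r v
  have hvr : v ≠ r := by rintro rfl; simp at h
  obtain ⟨w, hadj, q, hq⟩ := SimpleGraph.Walk.exists_eq_cons_of_ne hvr p.reverse
  refine ⟨w, hadj, ?_⟩
  have hqp : q.IsPath := by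
    have := hp.reverse
    rw [hq] at this
    exact this.of_cons
  have hlw : q.reverse.length = G.dist r w := tree_path_length hT _ hqp.reverse
  have hlen : p.reverse.length = q.length + 1 := by rw [hq]; simp
  rw [SimpleGraph.Walk.length_reverse] at hlen hlw
  omega

lemma tree_parent_unique (hT : G.IsTree) {y w₁ w₂ : V}
    (h₁ : G.Adj y w₁) (h₂ : G.Adj y w₂)
    (hd₁ : G.dist r w₁ + 1 = G.dist r y) (hd₂ : G.dist r w₂ + 1 = G.dist r y) :
    w₁ = w₂ := by
  classical
  obtain ⟨p₁, hp₁, hl₁⟩ := SimpleGraph.Connected.exists_path_of_dist hT.isConnected r w₁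
  obtain ⟨p₂, hp₂, hl₂⟩ := SimpleGraph.Connected.exists_path_of_dist hT.isConnected r w₂
  have hy₁ : y ∉ p₁.support := by
    intro hy
    have := SimpleGraph.Walk.length_takeUntil_le p₁ hy
    have := tree_path_length hT _ (hp₁.takeUntil hy)
    omega
  have hy₂ : y ∉ p₂.support := by
    intro hy
    have := SimpleGraph.Walk.length_takeUntil_le p₂ hy
    have := tree_path_length hT _ (hp₂.takeUntil hy)
    omega
  have hq₁ : (p₁.concat h₁.symm).IsPath := by
    rw [← SimpleGraph.Walk.isPath_reverse_iff, SimpleGraph.Walk.reverse_concat]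
    exact SimpleGraph.Walk.IsPath.cons hp₁.reverse (by simpa using hy₁)
  have hq₂ : (p₂.concat h₂.symm).IsPath := by
    rw [← SimpleGraph.Walk.isPath_reverse_iff, SimpleGraph.Walk.reverse_concat]
    exact SimpleGraph.Walk.IsPath.cons hp₂.reverse (by simpa using hy₂)
  have heq := hT.IsAcyclic.path_unique ⟨p₁.concat h₁.symm, hq₁⟩ ⟨p₂.concat h₂.symm, hq₂⟩
  rw [Subtype.mk.injEq] at heq
  have hg : ∀ (w : V) (pp : G.Walk r w) (hh : G.Adj w y), pp.length = G.dist r w →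
      (pp.concat hh).getVert (G.dist r w) = w := by
    intro w pp hh hlen
    rw [SimpleGraph.Walk.concat_eq_append, SimpleGraph.Walk.getVert_append]
    simp [hlen]
  have e₁ := hg w₁ p₁ h₁.symm hl₁
  have e₂ := hg w₂ p₂ h₂.symm hl₂
  have hdd : G.dist r w₁ = G.dist r w₂ := by omega
  rw [← e₁, heq, hdd, e₂]

lemma interior_two_nbrs {a b c : V} (p : G.Walk a b) (hp : p.IsPath)
    (hc : c ∈ p.support) (hca : c ≠ a) (hcb : c ≠ b) :
    ∃ z₁ z₂, z₁ ≠ z₂ ∧ G.Adj c z₁ ∧ G.Adj c z₂ ∧ z₁ ∈ p.support ∧ z₂ ∈ p.support := by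
  classical
  set t := p.takeUntil c hc with ht
  set s := p.dropUntil c hc with hs
  obtain ⟨z₂, hadj₂, s', hs'⟩ := SimpleGraph.Walk.exists_eq_cons_of_ne hcb s
  obtain ⟨z₁, hadj₁, t', ht'⟩ := SimpleGraph.Walk.exists_eq_cons_of_ne hca t.reverse
  have hz₁t : z₁ ∈ t.support := by
    have : z₁ ∈ t.reverse.support := by rw [ht']; simp
    simpa [SimpleGraph.Walk.support_reverse] using this
  have hz₂s : z₂ ∈ s.support.tail := by rw [hs']; simp
  have hsupp : p.support = t.support ++ s.support.tail := by
    conv_lhs => rw [← SimpleGraph.Walk.take_spec p hc]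
    rw [SimpleGraph.Walk.support_append]
  have hnd : (t.support ++ s.support.tail).Nodup := by rw [← hsupp]; exact hp.2
  have hne : z₁ ≠ z₂ := by
    intro hzz
    rw [List.nodup_append] at hnd
    exact hnd.2.2 z₁ hz₁t z₂ hz₂s hzz
  refine ⟨z₁, z₂, hne, hadj₁, hadj₂, ?_, ?_⟩
  · rw [hsupp]; exact List.mem_append_left _ hz₁t
  · rw [hsupp]; exact List.mem_append_right _ hz₂s

lemma reachable_induce_of_support {s : Set V} :
    ∀ {a b : V} (p : G.Walk a b) (hsupp : ∀ c ∈ p.support, c ∈ s),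
    (G.induce s).Reachable ⟨a, hsupp a p.start_mem_support⟩ ⟨b, hsupp b p.end_mem_support⟩ := by
  intro a b p
  induction p with
  | nil => intro h; rfl
  | cons hadj q ih =>
    intro h
    have h' : ∀ c ∈ q.support, c ∈ s := fun c hc => h c (by simp [hc])
    refine SimpleGraph.Reachable.trans ?_ (ih h')
    exact SimpleGraph.Adj.reachable (by simpa using hadj)

lemma induce_isTree_of_path_closed (hT : G.IsTree) {s : Set V} (hne : s.Nonempty)
    (hclosed : ∀ (a b : V), a ∈ s → b ∈ s → ∀ (p : G.Walk a b), p.IsPath →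
      ∀ c ∈ p.support, c ∈ s) :
    (G.induce s).IsTree := by
  constructor
  · rw [SimpleGraph.connected_iff]
    constructor
    · rintro ⟨x, hx⟩ ⟨y, hy⟩
      obtain ⟨p, hp, -⟩ := (hT.existsUnique_path x y)
      exact reachable_induce_of_support p (hclosed x y hx hy p hp)
    · exact ⟨⟨hne.choose, hne.choose_spec⟩⟩
  · intro v c hc
    let f : G.induce s →g G := SimpleGraph.Hom.comap _ G
    have hinj : Function.Injective f := Subtype.val_injective
    exact hT.IsAcyclic (c.map f) (hc.map hinj)

end tree

theorem tree_exists_good : ∀ (n : ℕ) (V : Type u) [Fintype V] [DecidableEq V]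
    (G : SimpleGraph V) [DecidableRel G.Adj], Fintype.card V = n → G.IsTree → ∀ r : V,
    ∃ S I : Finset V,
      IsGlobalDefensiveKAlliance G (-1) S ∧ r ∈ S ∧
      (∀ a ∈ I, ∀ b ∈ I, a ≠ b → ¬ G.Adj a b) ∧ S.card ≤ I.card := by
  intro n
  induction n using Nat.strong_induction_on with
  | _ n IH =>
  intro V _ _ G _ hcard hT r
  by_cases hsmall : Fintype.card V ≤ 1
  -- ===================== trivial case =====================
  · have hall : ∀ v : V, v = r := fun v => Fintype.card_le_one_iff.mp hsmall v r
    refine ⟨{r}, {r}, ⟨⟨⟨r, mem_singleton_self r⟩, ?_⟩, ?_⟩, mem_singleton_self r,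
      ?_, le_rfl⟩
    · intro v hv
      have hdeg : G.neighborFinset v = ∅ := by
        ext y
        simp only [SimpleGraph.mem_neighborFinset, Finset.notMem_empty, iff_false]
        intro hadj
        exact G.ne_of_adj hadj ((hall _).trans (hall _).symm)
      have h1 : degIn G ({r} : Finset V)ᶜ v = 0 := by simp [degIn, hdeg]
      have h2 : (0:ℕ) ≤ degIn G {r} v := Nat.zero_le _
      omega
    · intro v hv
      exact absurd (hall v) (by simpa using hv)
    · intro a _ b _ hne
      intro _
      exact hne ((hall a).trans (hall b).symm)
  -- ===================== nontrivial =====================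
  push_neg at hsmall
  have hn2 : 2 ≤ Fintype.card V := hsmall
  obtain ⟨x, -, hx⟩ := Finset.exists_max_image (univ : Finset V) (G.dist r) ⟨r, mem_univ r⟩
  have hxmax : ∀ v : V, G.dist r v ≤ G.dist r x := fun v => hx v (mem_univ v)
  have hdist0 : ∀ v : V, v ≠ r → G.dist r v ≠ 0 := by
    intro v hv
    have := SimpleGraph.Connected.pos_dist_of_ne hT.isConnected (Ne.symm hv)
    omega
  by_cases hD : G.dist r x ≤ 1
  -- ===================== star case =====================
  · have hadjr : ∀ v : V, v ≠ r → G.Adj r v := by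
      intro v hv
      have h1 : G.dist r v = 1 :=
        le_antisymm (le_trans (hxmax v) hD) (by have := hdist0 v hv; omega)
      exact SimpleGraph.dist_eq_one_iff_adj.mp h1
    have hnbrr : G.neighborFinset r = univ.erase r := by
      ext z
      simp only [SimpleGraph.mem_neighborFinset, mem_erase, mem_univ, and_true]
      exact ⟨fun h => (G.ne_of_adj h).symm, fun h => hadjr z h⟩
    have hnbra : ∀ a : V, a ≠ r → G.neighborFinset a = {r} := by
      intro a ha
      ext z
      simp only [SimpleGraph.mem_neighborFinset, mem_singleton]
      constructor
      · intro hadj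
        by_contra hz
        have hda : G.dist r a = 1 :=
          le_antisymm (le_trans (hxmax a) hD) (by have := hdist0 a ha; omega)
        have hdz : G.dist r z = 1 :=
          le_antisymm (le_trans (hxmax z) hD) (by have := hdist0 z hz; omega)
        rcases tree_adj_dist (r := r) hT hadj with h | h <;> omega
      · rintro rfl
        exact (hadjr a ha).symm
    have hsub : (Fintype.card V - 1) / 2 ≤ (univ.erase r).card := by
      rw [card_erase_of_mem (mem_univ r), card_univ]; omega
    obtain ⟨A, hA_sub, hA_card⟩ := Finset.exists_subset_card_eq hsub
    have hrA : r ∉ A := fun h => (mem_erase.mp (hA_sub h)).1 rfl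
    refine ⟨insert r A, univ.erase r, ⟨⟨⟨r, mem_insert_self r A⟩, ?_⟩, ?_⟩,
      mem_insert_self r A, ?_, ?_⟩
    · intro v hv
      rcases mem_insert.mp hv with rfl | hvA
      · have hdeg : G.degree v = Fintype.card V - 1 := by
          rw [← SimpleGraph.card_neighborFinset_eq_degree, hnbrr,
            card_erase_of_mem (mem_univ v), card_univ]
        have hin : degIn G (insert v A) v = (Fintype.card V - 1) / 2 := by
          have hinter : G.neighborFinset v ∩ insert v A = A := by
            ext y
            simp only [mem_inter, hnbrr, mem_erase, mem_univ, and_true, mem_insert]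
            constructor
            · rintro ⟨hyr, rfl | hyA⟩
              · exact absurd rfl hyr
              · exact hyA
            · intro hyA
              exact ⟨fun h => hrA (h ▸ hyA), Or.inr hyA⟩
          rw [degIn, hinter, hA_card]
        have haux := degIn_add_degIn (G := G) (insert v A) v
        omega
      · have hva : v ≠ r := fun h => hrA (h ▸ hvA)
        have h0 : degIn G (insert r A)ᶜ v = 0 := by
          rw [degIn, hnbra v hva]
          simp [Finset.singleton_inter_of_notMem, mem_insert_self]
        omega
    · intro v hv
      have hvr : v ≠ r := fun h => hv (h ▸ mem_insert_self r A)
      exact ⟨r, mem_insert_self r A, hadjr v hvr⟩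
    · intro a ha b hb hab hadj
      have hb' : b ∈ G.neighborFinset a := by
        rw [SimpleGraph.mem_neighborFinset]; exact hadj
      rw [hnbra a (mem_erase.mp ha).1] at hb'
      exact (mem_erase.mp hb).1 (mem_singleton.mp hb')
    · rw [card_insert_of_notMem hrA, hA_card, card_erase_of_mem (mem_univ r), card_univ]
      omega
  -- ===================== main case =====================
  · push_neg at hD
    have hD2 : 2 ≤ G.dist r x := hD
    obtain ⟨u, hxu, hu⟩ := tree_exists_parent (r := r) hT (v := x) (by omega)
    obtain ⟨w, huw, hw⟩ := tree_exists_parent (r := r) hT (v := u) (by omega)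
    -- hxu : G.Adj x u, hu : dist r u + 1 = dist r x
    -- huw : G.Adj u w, hw : dist r w + 1 = dist r u
    set L : Finset V := (G.neighborFinset u).erase w with hLdef
    have hLd : ∀ y ∈ L, G.dist r y = G.dist r x := by
      intro y hy
      obtain ⟨hyw, hyu⟩ := mem_erase.mp hy
      rw [SimpleGraph.mem_neighborFinset] at hyu
      rcases tree_adj_dist (r := r) hT hyu with h | h
      · omega
      · exact absurd (tree_parent_unique (r := r) hT hyu huw (by omega) (by omega)) hyw
    have hLnbr : ∀ y ∈ L, G.neighborFinset y = {u} := by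
      intro y hy
      obtain ⟨hyw, hyu⟩ := mem_erase.mp hy
      rw [SimpleGraph.mem_neighborFinset] at hyu
      have hdy : G.dist r y = G.dist r x := hLd y hy
      ext z
      simp only [SimpleGraph.mem_neighborFinset, mem_singleton]
      constructor
      · intro hadj
        rcases tree_adj_dist (r := r) hT hadj with h | h
        · have := hxmax z; omega
        · exact tree_parent_unique (r := r) hT hadj hyu.symm (by omega) (by omega)
      · rintro rfl
        exact hyu.symm
    have hxL : x ∈ L := by
      rw [hLdef, mem_erase]
      constructor
      · intro h
        rw [h] at hu
        omega
      · rw [SimpleGraph.mem_neighborFinset]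
        exact hxu.symm
    have huw' : w ∈ G.neighborFinset u := by
      rw [SimpleGraph.mem_neighborFinset]; exact huw
    have hnbru : G.neighborFinset u = insert w L := (Finset.insert_erase huw').symm
    have huL : u ∉ L := by
      intro h
      have := (mem_erase.mp h).2
      rw [SimpleGraph.mem_neighborFinset] at this
      exact G.loopless.irrefl u this
    have hwL : w ∉ L := fun h => (mem_erase.mp h).1 rfl
    set B : Finset V := insert u L with hBdef
    have huB : u ∈ B := mem_insert_self u L
    have hLB : ∀ y ∈ L, y ∈ B := fun y hy => mem_insert_of_mem hy
    have hwu_ne : w ≠ u := by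
      intro h
      rw [h] at hw
      omega
    have hwB : w ∉ B := by
      rw [hBdef, mem_insert]
      push_neg
      exact ⟨hwu_ne, hwL⟩
    have hru_ne : r ≠ u := by
      intro h
      rw [← h] at hu
      rw [SimpleGraph.dist_self] at hu
      omega
    have hrB : r ∉ B := by
      rw [hBdef, mem_insert]
      push_neg
      refine ⟨hru_ne, fun h => ?_⟩
      have := hLd r h
      rw [SimpleGraph.dist_self] at this
      omega
    -- the vertex set of the smaller tree
    set s : Set V := {v : V | v ∉ B} with hsdef
    have hmem_s : ∀ v : V, v ∈ s ↔ v ∉ B := fun v => Iff.rfl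
    haveI hdecs : DecidablePred (· ∈ s) := fun v => show Decidable (v ∉ B) from inferInstance
    have hclosed : ∀ (a b : V), a ∈ s → b ∈ s → ∀ (p : G.Walk a b), p.IsPath →
        ∀ c ∈ p.support, c ∈ s := by
      intro a b ha hb p hp c hc
      rw [hmem_s] at ha hb ⊢
      by_contra hcB
      have hLs : ∀ y ∈ L, y ∉ p.support := by
        intro y hy hysupp
        have hya : y ≠ a := fun h => ha (h ▸ hLB y hy)
        have hyb : y ≠ b := fun h => hb (h ▸ hLB y hy)
        obtain ⟨z₁, z₂, hz12, hadj1, hadj2, -, -⟩ := interior_two_nbrs p hp hysupp hya hyb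
        have h1 : z₁ ∈ G.neighborFinset y := by
          rw [SimpleGraph.mem_neighborFinset]; exact hadj1
        have h2 : z₂ ∈ G.neighborFinset y := by
          rw [SimpleGraph.mem_neighborFinset]; exact hadj2
        rw [hLnbr y hy] at h1 h2
        exact hz12 ((mem_singleton.mp h1).trans (mem_singleton.mp h2).symm)
      rcases mem_insert.mp hcB with rfl | hcL
      · have hca : c ≠ a := fun h => ha (h ▸ huB)
        have hcb : c ≠ b := fun h => hb (h ▸ huB)
        obtain ⟨z₁, z₂, hz12, hadj1, hadj2, hz1s, hz2s⟩ := interior_two_nbrs p hp hc hca hcb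
        have h1 : z₁ ∈ insert w L := by
          rw [← hnbru, SimpleGraph.mem_neighborFinset]; exact hadj1
        have h2 : z₂ ∈ insert w L := by
          rw [← hnbru, SimpleGraph.mem_neighborFinset]; exact hadj2
        rcases mem_insert.mp h1 with rfl | h1L
        · rcases mem_insert.mp h2 with rfl | h2L
          · exact hz12 rfl
          · exact hLs z₂ h2L hz2s
        · exact hLs z₁ h1L hz1s
      · exact hLs c hcL hc
    have hrs : r ∈ s := (hmem_s r).mpr hrB
    have hws : w ∈ s := (hmem_s w).mpr hwB
    have hT' : (G.induce s).IsTree :=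
      induce_isTree_of_path_closed hT ⟨r, hrs⟩ hclosed
    haveI : DecidableRel (G.induce s).Adj :=
      fun a b => show Decidable (G.Adj a b) from inferInstance
    have hBcard : B.card = L.card + 1 := card_insert_of_notMem huL
    have hLpos : 1 ≤ L.card := card_pos.mpr ⟨x, hxL⟩
    have hBuniv : B.card ≤ Fintype.card V := by
      rw [← card_univ]; exact card_le_card (subset_univ B)
    have hn' : Fintype.card ↥s = n - B.card := by
      have h1 : Fintype.card ↥s = s.toFinset.card := (Set.toFinset_card s).symm
      have h2 : s.toFinset = Bᶜ := by
        ext v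
        simp only [Set.mem_toFinset, Finset.mem_compl]
        exact hmem_s v
      rw [h1, h2, Finset.card_compl, hcard]
    have hn'lt : Fintype.card ↥s < n := by omega
    obtain ⟨S', I', hS', hrS', hI', hcards'⟩ :=
      IH (Fintype.card ↥s) hn'lt ↥s (G.induce s) rfl hT' ⟨r, hrs⟩
    set e : ↥s ↪ V := Function.Embedding.subtype _ with hedef
    set Sv : Finset V := S'.map e with hSvdef
    set Iv : Finset V := I'.map e with hIvdef
    have hmemmap : ∀ (K : Finset ↥s) (a : ↥s), e a ∈ K.map e ↔ a ∈ K :=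
      fun K a => Finset.mem_map' e
    have hmapB : ∀ (K : Finset ↥s) (y : V), y ∈ K.map e → y ∉ B := by
      intro K y hy
      obtain ⟨b, -, hby⟩ := mem_map.mp hy
      rw [← hby]
      exact (hmem_s b).mp b.2
    have hrSv : r ∈ Sv := (hmemmap S' ⟨r, hrs⟩).mpr hrS'
    have hF1 : ∀ (v' : ↥s) (K : Finset ↥s),
        degIn (G.induce s) K v' = (G.neighborFinset (e v') ∩ K.map e).card := by
      intro v' K
      rw [degIn, ← Finset.card_map e]
      congr 1
      ext y
      simp only [Finset.mem_map, mem_inter, SimpleGraph.mem_neighborFinset,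
        SimpleGraph.comap_adj, Function.Embedding.coe_subtype]
      constructor
      · rintro ⟨a, ⟨hadj, haK⟩, rfl⟩
        exact ⟨hadj, a, haK, rfl⟩
      · rintro ⟨hadj, a, haK, rfl⟩
        exact ⟨a, ⟨hadj, haK⟩, rfl⟩
    have hF2 : (S'ᶜ).map e = Bᶜ \ Sv := by
      ext y
      simp only [mem_sdiff, Finset.mem_compl]
      constructor
      · intro hy
        obtain ⟨a, ha, hay⟩ := mem_map.mp hy
        rw [Finset.mem_compl] at ha
        constructor
        · rw [← hay]; exact (hmem_s a).mp a.2
        · intro hySv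
          rw [← hay] at hySv
          exact ha ((hmemmap S' a).mp hySv)
      · rintro ⟨hyB, hySv⟩
        refine mem_map.mpr ⟨⟨y, (hmem_s y).mpr hyB⟩, ?_, rfl⟩
        rw [Finset.mem_compl]
        intro h
        exact hySv ((hmemmap S' _).mpr h)
    have htrans1 : ∀ v : V, v ∉ B → v ≠ w → G.neighborFinset v ∩ B = ∅ := by
      intro v hvB hvw
      ext y
      simp only [mem_inter, SimpleGraph.mem_neighborFinset, notMem_empty, iff_false, not_and]
      intro hadj hyB
      rcases mem_insert.mp hyB with rfl | hyL
      · have hv' : v ∈ insert w L := by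
          rw [← hnbru, SimpleGraph.mem_neighborFinset]; exact hadj.symm
        rcases mem_insert.mp hv' with rfl | hvL
        · exact hvw rfl
        · exact hvB (hLB v hvL)
      · have hv' : v ∈ ({u} : Finset V) := by
          rw [← hLnbr y hyL, SimpleGraph.mem_neighborFinset]; exact hadj.symm
        exact hvB ((mem_singleton.mp hv') ▸ huB)
    have htrans2 : G.neighborFinset w ∩ B = {u} := by
      ext y
      simp only [mem_inter, SimpleGraph.mem_neighborFinset, mem_singleton]
      constructor
      · rintro ⟨hadj, hyB⟩
        rcases mem_insert.mp hyB with rfl | hyL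
        · rfl
        · exfalso
          have hw' : w ∈ ({u} : Finset V) := by
            rw [← hLnbr y hyL, SimpleGraph.mem_neighborFinset]; exact hadj.symm
          exact hwu_ne (mem_singleton.mp hw')
      · rintro rfl
        exact ⟨huw.symm, huB⟩
    have key : ∀ E : Finset V, (∀ y ∈ E, y ∈ B) → (w ∈ Sv → u ∈ E) →
        (∀ v ∈ E, (degIn G (Sv ∪ E)ᶜ v : ℤ) + (-1) ≤ (degIn G (Sv ∪ E) v : ℤ)) →
        (∀ v ∈ B, v ∉ E → ∃ z ∈ Sv ∪ E, G.Adj z v) →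
        IsGlobalDefensiveKAlliance G (-1) (Sv ∪ E) := by
      intro E hEB hwE hEcond hEdom
      refine ⟨⟨⟨r, mem_union_left _ hrSv⟩, ?_⟩, ?_⟩
      · intro v hv
        by_cases hvE : v ∈ E
        · exact hEcond v hvE
        · have hvSv : v ∈ Sv := (mem_union.mp hv).resolve_right hvE
          obtain ⟨a, haS', rfl⟩ := mem_map.mp hvSv
          have hcond' := hS'.1.2 a haS'
          rw [hF1, hF1, hF2, ← hSvdef] at hcond'
          by_cases hvw : (e a : V) = w
          · have hwSv : w ∈ Sv := hvw ▸ (mem_map.mpr ⟨a, haS', rfl⟩)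
            have huE : u ∈ E := hwE hwSv
            have hSc_eq : G.neighborFinset (e a : V) ∩ (Sv ∪ E)ᶜ
                = G.neighborFinset (e a : V) ∩ (Bᶜ \ Sv) := by
              ext y
              simp only [mem_inter, Finset.mem_compl, mem_union, mem_sdiff, not_or]
              constructor
              · rintro ⟨hadj, hySv, hyE⟩
                refine ⟨hadj, ?_, hySv⟩
                intro hyB
                have hyu : y ∈ ({u} : Finset V) := by
                  rw [← htrans2]
                  exact mem_inter.mpr ⟨hvw ▸ hadj, hyB⟩
                exact hyE ((mem_singleton.mp hyu) ▸ huE)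
              · rintro ⟨hadj, hyB, hySv⟩
                exact ⟨hadj, hySv, fun hyE => hyB (hEB y hyE)⟩
            have hmono : (G.neighborFinset (e a : V) ∩ Sv).card
                ≤ degIn G (Sv ∪ E) (e a : V) := by
              rw [degIn]
              exact card_le_card (Finset.inter_subset_inter (Finset.Subset.refl _)
                Finset.subset_union_left)
            rw [degIn, hSc_eq]
            omega
          · have hnB : G.neighborFinset (e a : V) ∩ B = ∅ :=
              htrans1 _ (hmapB S' _ (mem_map.mpr ⟨a, haS', rfl⟩)) hvw
            have hSc_eq : G.neighborFinset (e a : V) ∩ (Sv ∪ E)ᶜ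
                = G.neighborFinset (e a : V) ∩ (Bᶜ \ Sv) := by
              ext y
              simp only [mem_inter, Finset.mem_compl, mem_union, mem_sdiff, not_or]
              constructor
              · rintro ⟨hadj, hySv, hyE⟩
                refine ⟨hadj, ?_, hySv⟩
                intro hyB
                have hmem : y ∈ G.neighborFinset (e a : V) ∩ B := mem_inter.mpr ⟨hadj, hyB⟩
                rw [hnB] at hmem
                exact notMem_empty y hmem
              · rintro ⟨hadj, hyB, hySv⟩
                exact ⟨hadj, hySv, fun hyE => hyB (hEB y hyE)⟩
            have hS_eq : G.neighborFinset (e a : V) ∩ (Sv ∪ E)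
                = G.neighborFinset (e a : V) ∩ Sv := by
              ext y
              simp only [mem_inter, mem_union]
              constructor
              · rintro ⟨hadj, hySv | hyE⟩
                · exact ⟨hadj, hySv⟩
                · exfalso
                  have hmem : y ∈ G.neighborFinset (e a : V) ∩ B :=
                    mem_inter.mpr ⟨hadj, hEB y hyE⟩
                  rw [hnB] at hmem
                  exact notMem_empty y hmem
              · rintro ⟨hadj, hySv⟩
                exact ⟨hadj, Or.inl hySv⟩
            rw [degIn, degIn, hSc_eq, hS_eq]
            exact hcond'
      · intro v hv
        rw [mem_union] at hv
        push_neg at hv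
        by_cases hvB : v ∈ B
        · exact hEdom v hvB hv.2
        · have hvs : v ∈ s := (hmem_s v).mpr hvB
          have hvS' : (⟨v, hvs⟩ : ↥s) ∉ S' := fun h => hv.1 ((hmemmap S' _).mpr h)
          obtain ⟨z', hz'S', hadj'⟩ := hS'.2 ⟨v, hvs⟩ hvS'
          exact ⟨(z' : V), mem_union_left _ ((hmemmap S' z').mpr hz'S'), hadj'⟩
    have hIv_notB : ∀ y ∈ Iv, y ∉ B := hmapB I'
    have hdisjIL : Disjoint Iv L := by
      rw [Finset.disjoint_left]
      intro y hyIv hyL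
      exact hIv_notB y hyIv (hLB y hyL)
    have hIndep : ∀ a ∈ Iv ∪ L, ∀ b ∈ Iv ∪ L, a ≠ b → ¬ G.Adj a b := by
      intro a ha b hb hab hadj
      rcases mem_union.mp ha with haIv | haL
      · rcases mem_union.mp hb with hbIv | hbL
        · obtain ⟨a', ha', rfl⟩ := mem_map.mp haIv
          obtain ⟨b', hb', rfl⟩ := mem_map.mp hbIv
          have hne' : a' ≠ b' := fun h => hab (by rw [h])
          exact hI' a' ha' b' hb' hne' hadj
        · have hmem : a ∈ ({u} : Finset V) := by
            rw [← hLnbr b hbL, SimpleGraph.mem_neighborFinset]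
            exact hadj.symm
          exact hIv_notB a haIv ((mem_singleton.mp hmem) ▸ huB)
      · rcases mem_union.mp hb with hbIv | hbL
        · have hmem : b ∈ ({u} : Finset V) := by
            rw [← hLnbr a haL, SimpleGraph.mem_neighborFinset]
            exact hadj
          exact hIv_notB b hbIv ((mem_singleton.mp hmem) ▸ huB)
        · have hmem : b ∈ ({u} : Finset V) := by
            rw [← hLnbr a haL, SimpleGraph.mem_neighborFinset]
            exact hadj
          exact huL ((mem_singleton.mp hmem) ▸ hbL)
    have hIcard : (Iv ∪ L).card = I'.card + L.card := by
      rw [card_union_of_disjoint hdisjIL, card_map]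
    by_cases hl2 : 2 ≤ L.card
    · -- at least two leaves: E = insert u A with A half of the leaves
      have hAsub : (L.card + 1) / 2 ≤ L.card := by omega
      obtain ⟨A, hA_sub, hA_card⟩ := Finset.exists_subset_card_eq hAsub
      have hEB : ∀ y ∈ insert u A, y ∈ B := by
        intro y hy
        rcases mem_insert.mp hy with rfl | hyA
        · exact huB
        · exact hLB y (hA_sub hyA)
      have huS : u ∈ Sv ∪ insert u A := mem_union_right _ (mem_insert_self u A)
      have hEcond : ∀ v ∈ insert u A,
          (degIn G (Sv ∪ insert u A)ᶜ v : ℤ) + (-1) ≤ (degIn G (Sv ∪ insert u A) v : ℤ) := by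
        intro v hv
        rcases mem_insert.mp hv with rfl | hvA
        · have hdegu : G.degree v = L.card + 1 := by
            rw [← SimpleGraph.card_neighborFinset_eq_degree, hnbru,
              card_insert_of_notMem hwL]
          have hin : (L.card + 1) / 2 ≤ degIn G (Sv ∪ insert v A) v := by
            rw [degIn, ← hA_card]
            apply card_le_card
            intro y hy
            refine mem_inter.mpr ⟨?_, ?_⟩
            · rw [hnbru]; exact mem_insert_of_mem (hA_sub hy)
            · exact mem_union_right _ (mem_insert_of_mem hy)
          have haux := degIn_add_degIn (G := G) (Sv ∪ insert v A) v
          omega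
        · have hnbrv : G.neighborFinset v = {u} := hLnbr v (hA_sub hvA)
          have h0 : degIn G (Sv ∪ insert u A)ᶜ v = 0 := by
            rw [degIn, hnbrv,
              Finset.singleton_inter_of_notMem (fun h => (Finset.mem_compl.mp h) huS),
              card_empty]
          omega
      have hEdom : ∀ v ∈ B, v ∉ insert u A → ∃ z ∈ Sv ∪ insert u A, G.Adj z v := by
        intro v hvB hvE
        rcases mem_insert.mp hvB with rfl | hvL
        · exact absurd (mem_insert_self v A) hvE
        · refine ⟨u, mem_union_right _ (mem_insert_self u A), ?_⟩
          have h2 := (mem_erase.mp hvL).2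
          rw [SimpleGraph.mem_neighborFinset] at h2
          exact h2
      refine ⟨Sv ∪ insert u A, Iv ∪ L,
        key (insert u A) hEB (fun _ => mem_insert_self u A) hEcond hEdom,
        mem_union_left _ hrSv, hIndep, ?_⟩
      have h1 : (Sv ∪ insert u A).card ≤ S'.card + (A.card + 1) := by
        calc (Sv ∪ insert u A).card ≤ Sv.card + (insert u A).card := card_union_le _ _
        _ ≤ S'.card + (A.card + 1) := by
            rw [card_map]
            exact Nat.add_le_add_left (card_insert_le u A) _
      rw [hIcard]
      omega
    · -- exactly one leaf
      have hl1 : L.card = 1 := by omega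
      have hLx : L = {x} := by
        obtain ⟨x₀, hx₀⟩ := Finset.card_eq_one.mp hl1
        rw [hx₀] at hxL ⊢
        rw [mem_singleton] at hxL
        rw [hxL]
      by_cases hwSv : w ∈ Sv
      · -- w belongs to the smaller alliance: take E = {u}
        have hEB : ∀ y ∈ ({u} : Finset V), y ∈ B := by
          intro y hy; rw [mem_singleton.mp hy]; exact huB
        have hEcond : ∀ v ∈ ({u} : Finset V),
            (degIn G (Sv ∪ {u})ᶜ v : ℤ) + (-1) ≤ (degIn G (Sv ∪ {u}) v : ℤ) := by
          intro v hv
          rw [mem_singleton.mp hv]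
          have hdegu : G.degree u = 2 := by
            rw [← SimpleGraph.card_neighborFinset_eq_degree, hnbru,
              card_insert_of_notMem hwL, hl1]
          have hin : 1 ≤ degIn G (Sv ∪ {u}) u := by
            rw [degIn]
            apply card_pos.mpr
            exact ⟨w, mem_inter.mpr ⟨huw', mem_union_left _ hwSv⟩⟩
          have haux := degIn_add_degIn (G := G) (Sv ∪ {u}) u
          omega
        have hEdom : ∀ v ∈ B, v ∉ ({u} : Finset V) → ∃ z ∈ Sv ∪ {u}, G.Adj z v := by
          intro v hvB hvE
          rcases mem_insert.mp hvB with rfl | hvL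
          · exact absurd (mem_singleton.mpr rfl) hvE
          · refine ⟨u, mem_union_right _ (mem_singleton_self u), ?_⟩
            have h2 := (mem_erase.mp hvL).2
            rw [SimpleGraph.mem_neighborFinset] at h2
            exact h2
        refine ⟨Sv ∪ {u}, Iv ∪ L,
          key {u} hEB (fun _ => mem_singleton_self u) hEcond hEdom,
          mem_union_left _ hrSv, hIndep, ?_⟩
        have h1 : (Sv ∪ {u}).card ≤ S'.card + 1 := by
          calc (Sv ∪ {u}).card ≤ Sv.card + 1 := by
                simpa using card_union_le Sv ({u} : Finset V)
          _ = S'.card + 1 := by rw [card_map]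
        rw [hIcard]
        omega
      · -- w is not in the smaller alliance: take E = {x}
        have hEB : ∀ y ∈ ({x} : Finset V), y ∈ B := by
          intro y hy; rw [mem_singleton.mp hy]; exact hLB x hxL
        have hEcond : ∀ v ∈ ({x} : Finset V),
            (degIn G (Sv ∪ {x})ᶜ v : ℤ) + (-1) ≤ (degIn G (Sv ∪ {x}) v : ℤ) := by
          intro v hv
          rw [mem_singleton.mp hv]
          have hnbrx : G.neighborFinset x = {u} := hLnbr x hxL
          have h1 : degIn G (Sv ∪ {x})ᶜ x ≤ 1 := by
            rw [degIn, hnbrx]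
            exact le_trans (card_le_card inter_subset_left) (by simp)
          omega
        have hEdom : ∀ v ∈ B, v ∉ ({x} : Finset V) → ∃ z ∈ Sv ∪ {x}, G.Adj z v := by
          intro v hvB hvE
          rcases mem_insert.mp hvB with rfl | hvL
          · exact ⟨x, mem_union_right _ (mem_singleton_self x), hxu⟩
          · exfalso
            rw [hLx, mem_singleton] at hvL
            exact hvE (hvL ▸ mem_singleton_self x)
        refine ⟨Sv ∪ {x}, Iv ∪ L,
          key {x} hEB (fun h => absurd h hwSv) hEcond hEdom,
          mem_union_left _ hrSv, hIndep, ?_⟩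
        have h1 : (Sv ∪ {x}).card ≤ S'.card + 1 := by
          calc (Sv ∪ {x}).card ≤ Sv.card + 1 := by
                simpa using card_union_le Sv ({x} : Finset V)
          _ = S'.card + 1 := by rw [card_map]
        rw [hIcard]
        omega


/-- Theorem: for any tree `T` (of order at least 2), `γ_{-1}^d(T) ≤ β₀(T)`. -/
theorem tree_globalDefensiveAllianceNum_le_independenceNum [Fintype V] [DecidableEq V]
    (G : SimpleGraph V) [DecidableRel G.Adj] (hT : G.IsTree) (hn : 2 ≤ Fintype.card V) :
    globalDefensiveAllianceNum G (-1) ≤ independenceNum G := by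
  haveI : Nonempty V := Fintype.card_pos_iff.mp (by omega)
  obtain ⟨S, I, hS, -, hI, hcard⟩ :=
    tree_exists_good (Fintype.card V) V G rfl hT (Classical.arbitrary V)
  have h1 : globalDefensiveAllianceNum G (-1) ≤ S.card :=
    Nat.sInf_le ⟨S, hS, rfl⟩
  have h2 : I.card ≤ independenceNum G := by
    apply le_csSup
    · refine ⟨Fintype.card V, ?_⟩
      rintro m ⟨T, -, rfl⟩
      exact le_trans (Finset.card_le_card (Finset.subset_univ T)) (le_of_eq Finset.card_univ)
    · exact ⟨I, hI, rfl⟩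
  omega
end

section
/- Let G = (V,E) be a finite simple graph, let k be an integer, and let S ⊆ V be a boundary defensive k-alliance in G. Let m(⟨S⟩) be the number of edges of G with both endpoints in S, and let c be the number of edges of G with exactly one endpoint in S. Then (i) 2·m(⟨S⟩) = c + |S|·k; and (ii) if G is δ-regular, then 4·m(⟨S⟩) = |S|·(δ+k) and 2c = |S|·(δ-k). -/
open Finset

variable {V : Type*}

/-- A nonempty set `S` is a boundary defensive `k`-alliance in `G` if every vertex of `S` has
exactly `k` more neighbors inside `S` than outside. -/
def IsBoundaryDefensiveKAlliance [Fintype V] [DecidableEq V] (G : SimpleGraph V)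
    [DecidableRel G.Adj] (k : ℤ) (S : Finset V) : Prop :=
  S.Nonempty ∧ ∀ v ∈ S, (degIn G S v : ℤ) = (degIn G Sᶜ v : ℤ) + k

/-- The number of edges of `G` with both endpoints in `S` (the size of `⟨S⟩`). -/
def edgesIn [Fintype V] [DecidableEq V] (G : SimpleGraph V) [DecidableRel G.Adj]
    (S : Finset V) : ℕ :=
  (G.edgeFinset.filter fun e => ∀ v ∈ e, v ∈ S).card

/-- The number of edges of `G` with exactly one endpoint in `S`. -/
def edgesCrossing [Fintype V] [DecidableEq V] (G : SimpleGraph V) [DecidableRel G.Adj]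
    (S : Finset V) : ℕ :=
  (G.edgeFinset.filter fun e => (∃ v ∈ e, v ∈ S) ∧ ∃ v ∈ e, v ∉ S).card

lemma card_adjPairs [Fintype V] [DecidableEq V] (G : SimpleGraph V) [DecidableRel G.Adj]
    (A B : Finset V) :
    ((A ×ˢ B).filter fun p => G.Adj p.1 p.2).card = ∑ v ∈ A, degIn G B v := by
  rw [Finset.card_eq_sum_card_fiberwise
    (f := Prod.fst) (t := A)
    (fun p hp => (Finset.mem_product.mp (Finset.mem_filter.mp hp).1).1)]
  refine Finset.sum_congr rfl fun v hv => ?_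
  have : (((A ×ˢ B).filter fun p => G.Adj p.1 p.2).filter fun p => p.1 = v)
      = ({v} : Finset V) ×ˢ (G.neighborFinset v ∩ B) := by
    ext ⟨x, y⟩
    simp only [Finset.mem_filter, Finset.mem_product, Finset.mem_singleton,
      Finset.mem_inter, SimpleGraph.mem_neighborFinset]
    constructor
    · rintro ⟨⟨⟨hx, hy⟩, hadj⟩, rfl⟩
      exact ⟨rfl, hadj, hy⟩
    · rintro ⟨rfl, hadj, hy⟩
      exact ⟨⟨⟨hv, hy⟩, hadj⟩, rfl⟩
  rw [this, Finset.card_product, Finset.card_singleton, one_mul, degIn]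

lemma pairs_in_card [Fintype V] [DecidableEq V] (G : SimpleGraph V) [DecidableRel G.Adj]
    (S : Finset V) :
    ((S ×ˢ S).filter fun p => G.Adj p.1 p.2).card = 2 * edgesIn G S := by
  rw [Finset.card_eq_sum_card_fiberwise
    (f := fun p => Sym2.mk p.1 p.2) (t := G.edgeFinset.filter fun e => ∀ v ∈ e, v ∈ S)
    (by
      rintro ⟨x, y⟩ hp
      rw [Finset.mem_coe, Finset.mem_filter, Finset.mem_product] at hp
      rw [Finset.mem_coe, Finset.mem_filter, SimpleGraph.mem_edgeFinset]
      refine ⟨hp.2, ?_⟩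
      intro v hv
      rw [Sym2.mem_iff] at hv
      rcases hv with rfl | rfl
      · exact hp.1.1
      · exact hp.1.2)]
  have hfib : ∀ e ∈ G.edgeFinset.filter fun e => ∀ v ∈ e, v ∈ S,
      (((S ×ˢ S).filter fun p => G.Adj p.1 p.2).filter fun p => Sym2.mk p.1 p.2 = e).card = 2 := by
    intro e he
    induction e using Sym2.ind with
    | _ a b =>
      rw [Finset.mem_filter, SimpleGraph.mem_edgeFinset, SimpleGraph.mem_edgeSet] at he
      have hab : G.Adj a b := he.1
      have haS : a ∈ S := he.2 a (Sym2.mem_mk_left a b)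
      have hbS : b ∈ S := he.2 b (Sym2.mem_mk_right a b)
      have hne : a ≠ b := hab.ne
      have : (((S ×ˢ S).filter fun p => G.Adj p.1 p.2).filter fun p => Sym2.mk p.1 p.2 = s(a, b))
          = {(a, b), (b, a)} := by
        ext ⟨x, y⟩
        simp only [Finset.mem_filter, Finset.mem_product, Finset.mem_insert,
          Finset.mem_singleton, Prod.mk.injEq, Sym2.eq_iff]
        constructor
        · rintro ⟨-, h⟩; exact h
        · rintro (⟨rfl, rfl⟩ | ⟨rfl, rfl⟩)
          · exact ⟨⟨⟨haS, hbS⟩, hab⟩, Or.inl ⟨rfl, rfl⟩⟩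
          · exact ⟨⟨⟨hbS, haS⟩, hab.symm⟩, Or.inr ⟨rfl, rfl⟩⟩
      rw [this, Finset.card_insert_of_notMem (by simp [hne]), Finset.card_singleton]
  rw [Finset.sum_congr rfl hfib, Finset.sum_const, smul_eq_mul, mul_comm, edgesIn]

lemma pairs_cross_card [Fintype V] [DecidableEq V] (G : SimpleGraph V) [DecidableRel G.Adj]
    (S : Finset V) :
    ((S ×ˢ Sᶜ).filter fun p => G.Adj p.1 p.2).card = edgesCrossing G S := by
  rw [Finset.card_eq_sum_card_fiberwise
    (f := fun p => Sym2.mk p.1 p.2)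
    (t := G.edgeFinset.filter fun e => (∃ v ∈ e, v ∈ S) ∧ ∃ v ∈ e, v ∉ S)
    (by
      rintro ⟨x, y⟩ hp
      rw [Finset.mem_coe, Finset.mem_filter, Finset.mem_product, Finset.mem_compl] at hp
      rw [Finset.mem_coe, Finset.mem_filter, SimpleGraph.mem_edgeFinset]
      exact ⟨hp.2, ⟨x, Sym2.mem_mk_left x y, hp.1.1⟩, ⟨y, Sym2.mem_mk_right x y, hp.1.2⟩⟩)]
  have hfib : ∀ e ∈ G.edgeFinset.filter fun e => (∃ v ∈ e, v ∈ S) ∧ ∃ v ∈ e, v ∉ S,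
      (((S ×ˢ Sᶜ).filter fun p => G.Adj p.1 p.2).filter fun p => Sym2.mk p.1 p.2 = e).card = 1 := by
    intro e he
    induction e using Sym2.ind with
    | _ a b =>
      rw [Finset.mem_filter, SimpleGraph.mem_edgeFinset, SimpleGraph.mem_edgeSet] at he
      have hab : G.Adj a b := he.1
      obtain ⟨⟨u, hu, huS⟩, ⟨w, hw, hwS⟩⟩ := he.2
      rw [Sym2.mem_iff] at hu hw
      -- exactly one of a, b in S
      have key : (a ∈ S ∧ b ∉ S) ∨ (b ∈ S ∧ a ∉ S) := by
        rcases hu with rfl | rfl <;> rcases hw with rfl | rfl <;> tauto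
      rcases key with ⟨haS, hbS⟩ | ⟨hbS, haS⟩
      · have : (((S ×ˢ Sᶜ).filter fun p => G.Adj p.1 p.2).filter fun p => Sym2.mk p.1 p.2 = s(a, b))
            = {(a, b)} := by
          ext ⟨x, y⟩
          simp only [Finset.mem_filter, Finset.mem_product, Finset.mem_compl,
            Finset.mem_singleton, Prod.mk.injEq, Sym2.eq_iff]
          constructor
          · rintro ⟨⟨⟨hx, hy⟩, -⟩, (⟨rfl, rfl⟩ | ⟨rfl, rfl⟩)⟩
            · exact ⟨rfl, rfl⟩
            · exact absurd hx hbS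
          · rintro ⟨rfl, rfl⟩
            exact ⟨⟨⟨haS, hbS⟩, hab⟩, Or.inl ⟨rfl, rfl⟩⟩
        rw [this, Finset.card_singleton]
      · have : (((S ×ˢ Sᶜ).filter fun p => G.Adj p.1 p.2).filter fun p => Sym2.mk p.1 p.2 = s(a, b))
            = {(b, a)} := by
          ext ⟨x, y⟩
          simp only [Finset.mem_filter, Finset.mem_product, Finset.mem_compl,
            Finset.mem_singleton, Prod.mk.injEq, Sym2.eq_iff]
          constructor
          · rintro ⟨⟨⟨hx, hy⟩, -⟩, (⟨rfl, rfl⟩ | ⟨rfl, rfl⟩)⟩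
            · exact absurd hx haS
            · exact ⟨rfl, rfl⟩
          · rintro ⟨rfl, rfl⟩
            exact ⟨⟨⟨hbS, haS⟩, hab.symm⟩, Or.inr ⟨rfl, rfl⟩⟩
        rw [this, Finset.card_singleton]
  rw [Finset.sum_congr rfl hfib, Finset.sum_const, smul_eq_mul, mul_one, edgesCrossing]


/-- Theorem: if `S` is a boundary defensive `k`-alliance in `G`, then
(i) `2·m(⟨S⟩) = c + |S|·k`, and (ii) if `G` is `δ`-regular then `4·m(⟨S⟩) = |S|·(δ+k)`
and `2c = |S|·(δ-k)`, where `c` is the number of edges with exactly one endpoint in `S`. -/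
theorem boundaryDefensiveKAlliance_edge_counts [Fintype V] [DecidableEq V]
    (G : SimpleGraph V) [DecidableRel G.Adj] (k : ℤ) (S : Finset V)
    (hS : IsBoundaryDefensiveKAlliance G k S) :
    2 * (edgesIn G S : ℤ) = (edgesCrossing G S : ℤ) + (S.card : ℤ) * k ∧
      ∀ d : ℕ, G.IsRegularOfDegree d →
        4 * (edgesIn G S : ℤ) = (S.card : ℤ) * ((d : ℤ) + k) ∧
          2 * (edgesCrossing G S : ℤ) = (S.card : ℤ) * ((d : ℤ) - k) := by
  obtain ⟨hne, hall⟩ := hS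
  have h1 : ∑ v ∈ S, degIn G S v = 2 * edgesIn G S := by
    rw [← card_adjPairs G S S, pairs_in_card]
  have h2 : ∑ v ∈ S, degIn G Sᶜ v = edgesCrossing G S := by
    rw [← card_adjPairs G S Sᶜ, pairs_cross_card]
  have H1 : ∑ v ∈ S, (degIn G S v : ℤ) = 2 * (edgesIn G S : ℤ) := by exact_mod_cast h1
  have H2 : ∑ v ∈ S, (degIn G Sᶜ v : ℤ) = (edgesCrossing G S : ℤ) := by exact_mod_cast h2
  have hsum : ∑ v ∈ S, (degIn G S v : ℤ)
      = ∑ v ∈ S, (degIn G Sᶜ v : ℤ) + (S.card : ℤ) * k := by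
    rw [Finset.sum_congr rfl hall, Finset.sum_add_distrib, Finset.sum_const,
      nsmul_eq_mul]
  have hi : 2 * (edgesIn G S : ℤ) = (edgesCrossing G S : ℤ) + (S.card : ℤ) * k := by
    linarith [H1, H2, hsum]
  refine ⟨hi, fun d hd => ?_⟩
  have hdeg : ∑ v ∈ S, ((degIn G S v : ℤ) + (degIn G Sᶜ v : ℤ)) = (S.card : ℤ) * d := by
    rw [Finset.sum_congr rfl (fun v _ => ?_), Finset.sum_const, nsmul_eq_mul]
    have := degIn_add_degIn_compl G S v
    rw [hd v] at this
    exact_mod_cast this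
  rw [Finset.sum_add_distrib, H1, H2] at hdeg
  constructor <;> linarith
end

section
/- Let G be a finite simple graph of order n with minimum degree δ, and let k be an integer. If S is a boundary defensive k-alliance in G, then ⌈(δ+k+2)/2⌉ ≤ |S| ≤ ⌊(2n-δ+k)/2⌋. -/
open Finset

variable {V : Type*}

/-- Theorem: if `S` is a boundary defensive `k`-alliance in `G`, then
`⌈(δ+k+2)/2⌉ ≤ |S| ≤ ⌊(2n-δ+k)/2⌋`. -/
theorem boundaryDefensiveKAlliance_card_bounds [Fintype V] [DecidableEq V] [Nonempty V]
    (G : SimpleGraph V) [DecidableRel G.Adj] (k : ℤ) (S : Finset V)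
    (hS : IsBoundaryDefensiveKAlliance G k S) :
    ⌈((G.minDegree : ℚ) + (k : ℚ) + 2) / 2⌉ ≤ (S.card : ℤ) ∧
      (S.card : ℤ) ≤ ⌊(2 * (Fintype.card V : ℚ) - (G.minDegree : ℚ) + (k : ℚ)) / 2⌋ := by

  obtain ⟨⟨v, hv⟩, hall⟩ := hS
  have hb := hall v hv
  have hdeg : degIn G S v + degIn G Sᶜ v = G.degree v := by
    simp only [degIn, SimpleGraph.degree]
    have h : G.neighborFinset v ∩ Sᶜ = G.neighborFinset v \ S := by
      ext x; simp
    rw [h, Finset.card_inter_add_card_sdiff]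
  have hmin : G.minDegree ≤ G.degree v := G.minDegree_le_degree v
  have hin : degIn G S v ≤ S.card - 1 := by
    have hsub : G.neighborFinset v ∩ S ⊆ S.erase v := by
      intro x hx
      simp only [Finset.mem_inter, SimpleGraph.mem_neighborFinset] at hx
      exact Finset.mem_erase.2 ⟨fun h => G.irrefl (h ▸ hx.1), hx.2⟩
    calc degIn G S v ≤ (S.erase v).card := Finset.card_le_card hsub
      _ = S.card - 1 := Finset.card_erase_of_mem hv
  have hcard : 1 ≤ S.card := Finset.card_pos.2 ⟨v, hv⟩
  have hout : degIn G Sᶜ v ≤ Fintype.card V - S.card := by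
    calc degIn G Sᶜ v ≤ Sᶜ.card := Finset.card_le_card Finset.inter_subset_right
      _ = Fintype.card V - S.card := Finset.card_compl S
  have hSn : S.card ≤ Fintype.card V := Finset.card_le_univ S |>.trans (le_of_eq (Finset.card_univ))
  have hdeg' : (degIn G S v : ℤ) + (degIn G Sᶜ v : ℤ) = (G.degree v : ℤ) := by exact_mod_cast hdeg
  have hmin' : (G.minDegree : ℤ) ≤ (G.degree v : ℤ) := by exact_mod_cast hmin
  have hin' : (degIn G S v : ℤ) ≤ (S.card : ℤ) - 1 := by
    have := Nat.cast_le (α := ℤ) |>.2 hin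
    push_cast [Nat.cast_sub hcard] at this
    linarith
  have hout' : (degIn G Sᶜ v : ℤ) ≤ (Fintype.card V : ℤ) - (S.card : ℤ) := by
    have := Nat.cast_le (α := ℤ) |>.2 hout
    push_cast [Nat.cast_sub hSn] at this
    linarith
  have A : (G.minDegree : ℤ) + k + 2 ≤ 2 * (S.card : ℤ) := by linarith
  have B : 2 * (S.card : ℤ) ≤ 2 * (Fintype.card V : ℤ) - (G.minDegree : ℤ) + k := by linarith
  constructor
  · rw [Int.ceil_le]
    rw [div_le_iff₀ (by norm_num : (0:ℚ) < 2)]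
    push_cast
    have : ((G.minDegree : ℚ) + k + 2) ≤ 2 * (S.card : ℚ) := by exact_mod_cast A
    linarith
  · rw [Int.le_floor]
    rw [le_div_iff₀ (by norm_num : (0:ℚ) < 2)]
    push_cast
    have : 2 * (S.card : ℚ) ≤ 2 * (Fintype.card V : ℚ) - (G.minDegree : ℚ) + k := by exact_mod_cast B
    linarith
end

section
/- Let G and H be finite simple graphs and let k₁, k₂ be integers. If S₁ is a defensive k₁-alliance in G and S₂ is a defensive k₂-alliance in H, then S₁ × S₂ is a defensive (k₁+k₂)-alliance in the Cartesian product G□H; consequently, if G contains a defensive k₁-alliance and H contains a defensive k₂-alliance, then a_{k₁+k₂}(G□H) ≤ a_{k₁}(G) · a_{k₂}(H). -/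
open Finset

variable {V : Type*}

instance {α β : Type*} (G : SimpleGraph α) (H : SimpleGraph β) [DecidableEq α] [DecidableEq β]
    [DecidableRel G.Adj] [DecidableRel H.Adj] : DecidableRel (G □ H).Adj := fun _ _ =>
  decidable_of_iff _ (SimpleGraph.boxProd_adj).symm

lemma degIn_box {V₁ V₂ : Type*} [Fintype V₁] [Fintype V₂]
    [DecidableEq V₁] [DecidableEq V₂] (G : SimpleGraph V₁) (H : SimpleGraph V₂)
    [DecidableRel G.Adj] [DecidableRel H.Adj] (a : V₁) (b : V₂)
    (T : Finset (V₁ × V₂)) (P₁ : Finset V₁) (P₂ : Finset V₂)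
    (h₁ : ∀ c, ((c, b) ∈ T ↔ c ∈ P₁)) (h₂ : ∀ d, ((a, d) ∈ T ↔ d ∈ P₂)) :
    degIn (G □ H) T (a, b) = degIn G P₁ a + degIn H P₂ b := by
  have hset : degIn (G □ H) T (a, b) =
      (((G.neighborFinset a ∩ P₁) ×ˢ {b}) ∪ ({a} ×ˢ (H.neighborFinset b ∩ P₂))).card := by
    rw [degIn]
    congr 1
    ext ⟨c, d⟩
    simp only [mem_inter, SimpleGraph.mem_neighborFinset, SimpleGraph.boxProd_adj,
      mem_union, mem_product, mem_singleton]
    constructor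
    · rintro ⟨hadj, hT⟩
      rcases hadj with ⟨hac, rfl⟩ | ⟨hbd, rfl⟩
      · exact Or.inl ⟨⟨hac, (h₁ c).1 hT⟩, rfl⟩
      · exact Or.inr ⟨rfl, hbd, (h₂ d).1 hT⟩
    · rintro (⟨⟨hac, hc⟩, rfl⟩ | ⟨rfl, hbd, hd⟩)
      · exact ⟨Or.inl ⟨hac, rfl⟩, (h₁ c).2 hc⟩
      · exact ⟨Or.inr ⟨hbd, rfl⟩, (h₂ d).2 hd⟩
  have hdisj : Disjoint ((G.neighborFinset a ∩ P₁) ×ˢ ({b} : Finset V₂))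
      (({a} : Finset V₁) ×ˢ (H.neighborFinset b ∩ P₂)) := by
    rw [Finset.disjoint_left]
    rintro ⟨c, d⟩ h1 h2
    simp only [mem_product, mem_singleton, mem_inter, SimpleGraph.mem_neighborFinset] at h1 h2
    exact G.irrefl (h2.1 ▸ h1.1.1)
  rw [hset, card_union_of_disjoint hdisj, card_product, card_product]
  simp [degIn]

/-- Theorem: if `S₁` is a defensive `k₁`-alliance in `G` and `S₂` is a defensive `k₂`-alliance
in `H`, then `S₁ × S₂` is a defensive `(k₁+k₂)`-alliance in `G □ H`; consequently, if such
alliances exist then `a_{k₁+k₂}(G □ H) ≤ a_{k₁}(G) · a_{k₂}(H)`. -/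
theorem boxProd_defensiveAlliance {V₁ V₂ : Type*} [Fintype V₁] [Fintype V₂]
    [DecidableEq V₁] [DecidableEq V₂] (G : SimpleGraph V₁) (H : SimpleGraph V₂)
    [DecidableRel G.Adj] [DecidableRel H.Adj] (k₁ k₂ : ℤ) :
    (∀ (S₁ : Finset V₁) (S₂ : Finset V₂), IsDefensiveKAlliance G k₁ S₁ →
        IsDefensiveKAlliance H k₂ S₂ →
          IsDefensiveKAlliance (G □ H) (k₁ + k₂) (S₁ ×ˢ S₂)) ∧
      ((∃ S₁ : Finset V₁, IsDefensiveKAlliance G k₁ S₁) →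
        (∃ S₂ : Finset V₂, IsDefensiveKAlliance H k₂ S₂) →
          defensiveAllianceNum (G □ H) (k₁ + k₂) ≤
            defensiveAllianceNum G k₁ * defensiveAllianceNum H k₂) := by
  have main : ∀ (S₁ : Finset V₁) (S₂ : Finset V₂), IsDefensiveKAlliance G k₁ S₁ →
      IsDefensiveKAlliance H k₂ S₂ →
        IsDefensiveKAlliance (G □ H) (k₁ + k₂) (S₁ ×ˢ S₂) := by
    rintro S₁ S₂ ⟨hne₁, h₁⟩ ⟨hne₂, h₂⟩
    refine ⟨hne₁.product hne₂, ?_⟩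
    rintro ⟨a, b⟩ hab
    rw [mem_product] at hab
    obtain ⟨ha, hb⟩ := hab
    have e1 : degIn (G □ H) (S₁ ×ˢ S₂) (a, b) = degIn G S₁ a + degIn H S₂ b := by
      apply degIn_box <;> intro x <;> simp [ha, hb]
    have e2 : degIn (G □ H) (S₁ ×ˢ S₂)ᶜ (a, b) = degIn G S₁ᶜ a + degIn H S₂ᶜ b := by
      apply degIn_box <;> intro x <;> simp [ha, hb]
    rw [e1, e2]
    have := h₁ a ha
    have := h₂ b hb
    push_cast
    omega
  refine ⟨main, ?_⟩
  rintro ⟨S₁, hS₁⟩ ⟨S₂, hS₂⟩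
  have hne₁ : {m : ℕ | ∃ S : Finset V₁, IsDefensiveKAlliance G k₁ S ∧ S.card = m}.Nonempty :=
    ⟨S₁.card, S₁, hS₁, rfl⟩
  have hne₂ : {m : ℕ | ∃ S : Finset V₂, IsDefensiveKAlliance H k₂ S ∧ S.card = m}.Nonempty :=
    ⟨S₂.card, S₂, hS₂, rfl⟩
  obtain ⟨T₁, hT₁, hc₁⟩ := Nat.sInf_mem hne₁
  obtain ⟨T₂, hT₂, hc₂⟩ := Nat.sInf_mem hne₂
  have := main T₁ T₂ hT₁ hT₂
  calc defensiveAllianceNum (G □ H) (k₁ + k₂) ≤ (T₁ ×ˢ T₂).card :=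
        Nat.sInf_le ⟨T₁ ×ˢ T₂, this, rfl⟩
    _ = defensiveAllianceNum G k₁ * defensiveAllianceNum H k₂ := by
        rw [card_product, hc₁, hc₂]; rfl
end

section
/- Let G = (V₁,E₁) and H = (V₂,E₂) be finite simple graphs with maximum degrees Δ₁ and Δ₂ respectively, and let k be an integer. If S ⊆ V₁×V₂ is a defensive k-alliance in the Cartesian product G□H, then the projection P_G(S) of S onto V₁ is a defensive (k-Δ₂)-alliance in G and the projection P_H(S) of S onto V₂ is a defensive (k-Δ₁)-alliance in H. -/
open Finset

variable {V : Type*}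

lemma degIn_eq [Fintype V] [DecidableEq V] (G : SimpleGraph V) [DecidableRel G.Adj]
    (S : Finset V) (v : V) : degIn G S v = (S.filter (fun u => G.Adj v u)).card := by
  unfold degIn
  congr 1
  ext u
  simp [SimpleGraph.mem_neighborFinset, and_comm]

lemma aux_fst {V₁ V₂ : Type*} [Fintype V₁] [Fintype V₂]
    [DecidableEq V₁] [DecidableEq V₂] (G : SimpleGraph V₁) (H : SimpleGraph V₂)
    [DecidableRel G.Adj] [DecidableRel H.Adj] (k : ℤ) (S : Finset (V₁ × V₂))
    (hS : IsDefensiveKAlliance (G □ H) k S) :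
    IsDefensiveKAlliance G (k - (H.maxDegree : ℤ)) (S.image Prod.fst) := by
  obtain ⟨hne, hdef⟩ := hS
  refine ⟨hne.image _, ?_⟩
  intro a ha
  obtain ⟨⟨a, b⟩, hpS, rfl⟩ := Finset.mem_image.mp ha
  dsimp only
  set P := S.image (Prod.fst : V₁ × V₂ → V₁) with hP
  set A := S.filter (fun p => ((G □ H).Adj (a, b) p ∧ p.2 = b)) with hA
  set B := S.filter (fun p => ((G □ H).Adj (a, b) p ∧ p.1 = a)) with hB
  have h1 : A.card ≤ degIn G P a := by
    rw [degIn_eq]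
    apply Finset.card_le_card_of_injOn Prod.fst
    · intro p hp
      rw [hA, Finset.mem_coe, Finset.mem_filter] at hp
      obtain ⟨hpS', hadj, hpb⟩ := hp
      rw [SimpleGraph.boxProd_adj] at hadj
      rcases hadj with ⟨hG, _⟩ | ⟨hH, _⟩
      · exact Finset.mem_filter.mpr ⟨Finset.mem_image.mpr ⟨_, hpS', rfl⟩, hG⟩
      · exact absurd (hpb ▸ hH) (H.irrefl)
    · intro p hp q hq hpq
      simp only [hA, Finset.mem_coe, Finset.mem_filter] at hp hq
      exact Prod.ext hpq (hp.2.2.trans hq.2.2.symm)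
  have h2 : B.card ≤ H.maxDegree := by
    have hd : B.card ≤ H.degree b := by
      rw [← SimpleGraph.card_neighborFinset_eq_degree]
      apply Finset.card_le_card_of_injOn Prod.snd
      · intro p hp
        rw [hB, Finset.mem_coe, Finset.mem_filter] at hp
        obtain ⟨hpS', hadj, hpa⟩ := hp
        rw [SimpleGraph.boxProd_adj] at hadj
        rcases hadj with ⟨hG, _⟩ | ⟨hH, _⟩
        · exact absurd (hpa ▸ hG) (G.irrefl)
        · exact (SimpleGraph.mem_neighborFinset _ _ _).mpr hH
      · intro p hp q hq hpq
        simp only [hB, Finset.mem_coe, Finset.mem_filter] at hp hq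
        exact Prod.ext (hp.2.2.trans hq.2.2.symm) hpq
    exact hd.trans (H.degree_le_maxDegree b)
  have h3 : degIn G Pᶜ a ≤ degIn (G □ H) Sᶜ (a, b) := by
    rw [degIn_eq, degIn_eq]
    apply Finset.card_le_card_of_injOn (fun x => (x, b))
    · intro x hx
      rw [Finset.mem_coe, Finset.mem_filter, Finset.mem_compl] at hx
      refine Finset.mem_filter.mpr ⟨Finset.mem_compl.mpr fun hmem => hx.1 ?_,
        SimpleGraph.boxProd_adj.mpr (Or.inl ⟨hx.2, rfl⟩)⟩
      exact Finset.mem_image.mpr ⟨_, hmem, rfl⟩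
    · intro x _ y _ hxy
      exact (Prod.ext_iff.mp hxy).1
  have h4 : degIn (G □ H) S (a, b) ≤ A.card + B.card := by
    rw [degIn_eq]
    calc (S.filter (fun p => (G □ H).Adj (a, b) p)).card ≤ (A ∪ B).card := by
          apply Finset.card_le_card
          intro p hp
          rw [Finset.mem_filter] at hp
          have hadj := SimpleGraph.boxProd_adj.mp hp.2
          rcases hadj with ⟨_, h⟩ | ⟨_, h⟩
          · exact Finset.mem_union_left _ (Finset.mem_filter.mpr ⟨hp.1, hp.2, h.symm⟩)
          · exact Finset.mem_union_right _ (Finset.mem_filter.mpr ⟨hp.1, hp.2, h.symm⟩)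
      _ ≤ A.card + B.card := Finset.card_union_le _ _
  have h5 := hdef (a, b) hpS
  push_cast at *
  linarith

lemma aux_snd {V₁ V₂ : Type*} [Fintype V₁] [Fintype V₂]
    [DecidableEq V₁] [DecidableEq V₂] (G : SimpleGraph V₁) (H : SimpleGraph V₂)
    [DecidableRel G.Adj] [DecidableRel H.Adj] (k : ℤ) (S : Finset (V₁ × V₂))
    (hS : IsDefensiveKAlliance (G □ H) k S) :
    IsDefensiveKAlliance H (k - (G.maxDegree : ℤ)) (S.image Prod.snd) := by
  obtain ⟨hne, hdef⟩ := hS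
  refine ⟨hne.image _, ?_⟩
  intro b hb
  obtain ⟨⟨a, b⟩, hpS, rfl⟩ := Finset.mem_image.mp hb
  dsimp only
  set P := S.image (Prod.snd : V₁ × V₂ → V₂) with hP
  set A := S.filter (fun p => ((G □ H).Adj (a, b) p ∧ p.1 = a)) with hA
  set B := S.filter (fun p => ((G □ H).Adj (a, b) p ∧ p.2 = b)) with hB
  have h1 : A.card ≤ degIn H P b := by
    rw [degIn_eq]
    apply Finset.card_le_card_of_injOn Prod.snd
    · intro p hp
      rw [hA, Finset.mem_coe, Finset.mem_filter] at hp
      obtain ⟨hpS', hadj, hpa⟩ := hp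
      rw [SimpleGraph.boxProd_adj] at hadj
      rcases hadj with ⟨hG, _⟩ | ⟨hH, _⟩
      · exact absurd (hpa ▸ hG) (G.irrefl)
      · exact Finset.mem_filter.mpr ⟨Finset.mem_image.mpr ⟨_, hpS', rfl⟩, hH⟩
    · intro p hp q hq hpq
      simp only [hA, Finset.mem_coe, Finset.mem_filter] at hp hq
      exact Prod.ext (hp.2.2.trans hq.2.2.symm) hpq
  have h2 : B.card ≤ G.maxDegree := by
    have hd : B.card ≤ G.degree a := by
      rw [← SimpleGraph.card_neighborFinset_eq_degree]
      apply Finset.card_le_card_of_injOn Prod.fst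
      · intro p hp
        rw [hB, Finset.mem_coe, Finset.mem_filter] at hp
        obtain ⟨hpS', hadj, hpb⟩ := hp
        rw [SimpleGraph.boxProd_adj] at hadj
        rcases hadj with ⟨hG, _⟩ | ⟨hH, _⟩
        · exact (SimpleGraph.mem_neighborFinset _ _ _).mpr hG
        · exact absurd (hpb ▸ hH) (H.irrefl)
      · intro p hp q hq hpq
        simp only [hB, Finset.mem_coe, Finset.mem_filter] at hp hq
        exact Prod.ext hpq (hp.2.2.trans hq.2.2.symm)
    exact hd.trans (G.degree_le_maxDegree a)
  have h3 : degIn H Pᶜ b ≤ degIn (G □ H) Sᶜ (a, b) := by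
    rw [degIn_eq, degIn_eq]
    apply Finset.card_le_card_of_injOn (fun y => (a, y))
    · intro y hy
      rw [Finset.mem_coe, Finset.mem_filter, Finset.mem_compl] at hy
      refine Finset.mem_filter.mpr ⟨Finset.mem_compl.mpr fun hmem => hy.1 ?_,
        SimpleGraph.boxProd_adj.mpr (Or.inr ⟨hy.2, rfl⟩)⟩
      exact Finset.mem_image.mpr ⟨_, hmem, rfl⟩
    · intro x _ y _ hxy
      exact (Prod.ext_iff.mp hxy).2
  have h4 : degIn (G □ H) S (a, b) ≤ A.card + B.card := by
    rw [degIn_eq]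
    calc (S.filter (fun p => (G □ H).Adj (a, b) p)).card ≤ (A ∪ B).card := by
          apply Finset.card_le_card
          intro p hp
          rw [Finset.mem_filter] at hp
          have hadj := SimpleGraph.boxProd_adj.mp hp.2
          rcases hadj with ⟨_, h⟩ | ⟨_, h⟩
          · exact Finset.mem_union_right _ (Finset.mem_filter.mpr ⟨hp.1, hp.2, h.symm⟩)
          · exact Finset.mem_union_left _ (Finset.mem_filter.mpr ⟨hp.1, hp.2, h.symm⟩)
      _ ≤ A.card + B.card := Finset.card_union_le _ _
  have h5 := hdef (a, b) hpS
  push_cast at *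
  linarith

/-- Theorem: if `S` is a defensive `k`-alliance in `G □ H`, then the projection of `S` onto
`G` is a defensive `(k-Δ₂)`-alliance in `G` and the projection of `S` onto `H` is a defensive
`(k-Δ₁)`-alliance in `H`. -/
theorem boxProd_defensiveAlliance_projections {V₁ V₂ : Type*} [Fintype V₁] [Fintype V₂]
    [DecidableEq V₁] [DecidableEq V₂] (G : SimpleGraph V₁) (H : SimpleGraph V₂)
    [DecidableRel G.Adj] [DecidableRel H.Adj] (k : ℤ) (S : Finset (V₁ × V₂))
    (hS : IsDefensiveKAlliance (G □ H) k S) :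
    IsDefensiveKAlliance G (k - (H.maxDegree : ℤ)) (S.image Prod.fst) ∧
      IsDefensiveKAlliance H (k - (G.maxDegree : ℤ)) (S.image Prod.snd) := by
  exact ⟨aux_fst G H k S hS, aux_snd G H k S hS⟩
end

section
/- Let G be a finite simple graph of order n and minimum degree δ, let k be an integer, and suppose {S₁,...,S_r} is a partition of the vertex set of G into r ≥ 2 global defensive k-alliances. Then r ≤ ⌊(√(k²+4n) - k)/2⌋ and r ≤ ⌊(δ-k+2)/2⌋. -/
open Finset

variable {V : Type*}

/-- Theorem: if the vertex set of `G` is partitioned into `r ≥ 2` global defensive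
`k`-alliances, then `r ≤ ⌊(√(k²+4n) - k)/2⌋` and `r ≤ ⌊(δ-k+2)/2⌋`. -/
theorem partition_globalDefensiveKAlliances_bounds [Fintype V] [DecidableEq V] [Nonempty V]
    (G : SimpleGraph V) [DecidableRel G.Adj] (k : ℤ) (r : ℕ) (hr : 2 ≤ r)
    (P : Finpartition (univ : Finset V)) (hcard : P.parts.card = r)
    (hparts : ∀ p ∈ P.parts, IsGlobalDefensiveKAlliance G k p) :
    (r : ℤ) ≤ ⌊(Real.sqrt ((k : ℝ) ^ 2 + 4 * (Fintype.card V : ℝ)) - (k : ℝ)) / 2⌋ ∧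
      (r : ℤ) ≤ ⌊((G.minDegree : ℚ) - (k : ℚ) + 2) / 2⌋ := by
  classical
  have hpart_eq : ∀ q₁ ∈ P.parts, ∀ q₂ ∈ P.parts, ∀ x, x ∈ q₁ → x ∈ q₂ → q₁ = q₂ := by
    intro q₁ h₁ q₂ h₂ x hx₁ hx₂
    by_contra hne
    exact (Finset.disjoint_left.mp (P.disjoint h₁ h₂ hne) hx₁) hx₂
  -- split of degree
  have hsplit : ∀ (p : Finset V) (v : V), degIn G p v + degIn G pᶜ v = G.degree v := by
    intro p v
    unfold degIn
    rw [← card_union_of_disjoint (Disjoint.mono inf_le_right inf_le_right disjoint_compl_right),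
      ← inter_union_distrib_left, union_compl, inter_univ]
    rfl
  -- each vertex of a part has ≥ r-1 neighbors outside its part
  have hA : ∀ p ∈ P.parts, ∀ v ∈ p, (r : ℤ) - 1 ≤ (degIn G pᶜ v : ℤ) := by
    intro p hp v hv
    set f : Finset V → V := fun q => if h : ∃ u ∈ q, G.Adj u v then h.choose else v with hf
    have key : ∀ q ∈ P.parts.erase p, f q ∈ q ∧ G.Adj (f q) v := by
      intro q hq
      obtain ⟨hqne, hqp⟩ := mem_erase.mp hq
      have hvq : v ∉ q := fun hvq => hqne (hpart_eq q hqp p hp v hvq hv)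
      have hex : ∃ u ∈ q, G.Adj u v := (hparts q hqp).2 v hvq
      simp only [hf, dif_pos hex]
      exact ⟨hex.choose_spec.1, hex.choose_spec.2⟩
    have hmaps : ∀ q ∈ P.parts.erase p, f q ∈ G.neighborFinset v ∩ pᶜ := by
      intro q hq
      obtain ⟨hfq, hadj⟩ := key q hq
      obtain ⟨hqne, hqp⟩ := mem_erase.mp hq
      refine mem_inter.mpr ⟨(SimpleGraph.mem_neighborFinset _ _ _).mpr hadj.symm,
        mem_compl.mpr fun hfp => hqne (hpart_eq q hqp p hp _ hfq hfp)⟩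
    have hinj : Set.InjOn f ↑(P.parts.erase p) := by
      intro q₁ h₁ q₂ h₂ he
      simp only [Finset.coe_erase, Set.mem_diff, Finset.mem_coe] at h₁ h₂
      exact hpart_eq q₁ h₁.1 q₂ h₂.1 (f q₁) (key q₁ (mem_erase.mpr ⟨h₁.2, h₁.1⟩)).1
        (he ▸ (key q₂ (mem_erase.mpr ⟨h₂.2, h₂.1⟩)).1)
    have hle := card_le_card_of_injOn f hmaps hinj
    rw [card_erase_of_mem hp, hcard] at hle
    have : r - 1 ≤ degIn G pᶜ v := hle
    omega
  -- inside-degree bound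
  have hB : ∀ p ∈ P.parts, ∀ v ∈ p, (r : ℤ) - 1 + k ≤ (degIn G p v : ℤ) := by
    intro p hp v hv
    have := (hparts p hp).1.2 v hv
    have := hA p hp v hv
    linarith
  -- part size bound
  have hpc : ∀ p ∈ P.parts, (r : ℤ) + k ≤ (p.card : ℤ) := by
    intro p hp
    obtain ⟨v, hv⟩ := (hparts p hp).1.1
    have hsub : G.neighborFinset v ∩ p ⊆ p.erase v := by
      intro x hx
      rw [mem_inter] at hx
      refine mem_erase.mpr ⟨fun hxv => ?_, hx.2⟩
      exact G.irrefl (hxv ▸ (SimpleGraph.mem_neighborFinset _ _ _).mp hx.1)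
    have h1 : degIn G p v ≤ p.card - 1 := by
      have := card_le_card hsub
      rwa [card_erase_of_mem hv] at this
    have h2 : 1 ≤ p.card := card_pos.mpr ⟨v, hv⟩
    have h3 := hB p hp v hv
    have : (degIn G p v : ℤ) ≤ (p.card : ℤ) - 1 := by
      have := h1; omega
    linarith
  -- n ≥ r(r+k)
  have hsum : (r : ℤ) * ((r : ℤ) + k) ≤ (Fintype.card V : ℤ) := by
    have h1 : ∑ p ∈ P.parts, ((r : ℤ) + k) ≤ ∑ p ∈ P.parts, (p.card : ℤ) :=
      Finset.sum_le_sum hpc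
    rw [Finset.sum_const, hcard] at h1
    have h2 : ∑ p ∈ P.parts, (p.card : ℤ) = (Fintype.card V : ℤ) := by
      rw [← Nat.cast_sum, P.sum_card_parts, Finset.card_univ]
    rw [h2] at h1
    simpa [nsmul_eq_mul, mul_add] using h1
  constructor
  · -- first bound
    rw [Int.le_floor]
    have hy : (0 : ℝ) ≤ (k : ℝ) ^ 2 + 4 * (Fintype.card V : ℝ) := by positivity
    have hx : 2 * (r : ℝ) + (k : ℝ) ≤ Real.sqrt ((k : ℝ) ^ 2 + 4 * (Fintype.card V : ℝ)) := by
      rcases le_or_gt (2 * (r : ℝ) + (k : ℝ)) 0 with h | h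
      · exact h.trans (Real.sqrt_nonneg _)
      · rw [Real.le_sqrt h.le hy]
        have hs : (r : ℝ) * ((r : ℝ) + (k : ℝ)) ≤ (Fintype.card V : ℝ) := by
          exact_mod_cast hsum
        nlinarith
    push_cast
    linarith
  · -- second bound
    obtain ⟨v, hv⟩ := G.exists_minimal_degree_vertex
    obtain ⟨p, hp, hvp⟩ := P.exists_mem (mem_univ v)
    have hdeg : 2 * (r : ℤ) - 2 + k ≤ (G.degree v : ℤ) := by
      have h1 := hA p hp v hvp
      have h2 := hB p hp v hvp
      have h3 := hsplit p v
      have : (degIn G p v : ℤ) + (degIn G pᶜ v : ℤ) = (G.degree v : ℤ) := by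
        exact_mod_cast congrArg (Nat.cast : ℕ → ℤ) h3
      linarith
    rw [hv] at *
    rw [Int.le_floor]
    have hq : 2 * (r : ℚ) - 2 + (k : ℚ) ≤ (G.degree v : ℚ) := by exact_mod_cast hdeg
    push_cast
    rw [hv]
    linarith
end

section
/- Let G be a finite simple graph of order n and size m, let k be an integer, and suppose {S₁,...,S_r} is a partition of the vertex set of G into r ≥ 2 global defensive k-alliances. Let c be the number of edges of G having endpoints in different sets of the partition. Then (i) c ≥ (1/2)·r·(r-1)·γ_k^d(G); (ii) c ≥ (1/2)·r·(r-1)·(r+k); and (iii) c ≤ (2m - nk)/4. -/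
open Finset

variable {V : Type*}

/-- Theorem: if the vertex set of `G` is partitioned into `r ≥ 2` global defensive
`k`-alliances and `c` is the number of edges with endpoints in different sets of the
partition, then (i) `c ≥ (1/2)r(r-1)γ_k^d(G)`, (ii) `c ≥ (1/2)r(r-1)(r+k)` and
(iii) `c ≤ (2m - nk)/4`. -/
theorem partition_globalDefensiveKAlliances_crossing_edges [Fintype V] [DecidableEq V]
    (G : SimpleGraph V) [DecidableRel G.Adj] (k : ℤ) (r : ℕ) (hr : 2 ≤ r)
    (P : Finpartition (univ : Finset V)) (hcard : P.parts.card = r)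
    (hparts : ∀ p ∈ P.parts, IsGlobalDefensiveKAlliance G k p)
    (c : ℕ)
    (hc : c = (G.edgeFinset.filter fun e => ¬ ∃ p ∈ P.parts, ∀ v ∈ e, v ∈ p).card) :
    (1 / 2 : ℚ) * (r : ℚ) * ((r : ℚ) - 1) * (globalDefensiveAllianceNum G k : ℚ) ≤ (c : ℚ) ∧
      (1 / 2 : ℚ) * (r : ℚ) * ((r : ℚ) - 1) * ((r : ℚ) + (k : ℚ)) ≤ (c : ℚ) ∧
      (c : ℚ) ≤ (2 * (G.edgeFinset.card : ℚ) - (Fintype.card V : ℚ) * (k : ℚ)) / 4 := by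
  classical
  set f : V → Finset V := fun v => P.part v with hf
  have hmem : ∀ v, v ∈ f v := fun v => P.mem_part (mem_univ v)
  have hfmem : ∀ v, f v ∈ P.parts := fun v => P.part_mem.mpr (mem_univ v)
  have hfeq : ∀ p ∈ P.parts, ∀ v ∈ p, f v = p := fun p hp v hv => P.part_eq_of_mem hp hv
  have hcrossiff : ∀ u v : V,
      ((¬ ∃ p ∈ P.parts, ∀ w ∈ (s(u, v) : Sym2 V), w ∈ p) ↔ f u ≠ f v) := by
    intro u v
    constructor
    · intro h hne
      refine h ⟨f u, hfmem u, fun w hw => ?_⟩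
      rcases Sym2.mem_iff.mp hw with rfl | rfl
      · exact hmem _
      · rw [hne]; exact hmem _
    · rintro hne ⟨p, hp, hall⟩
      exact hne ((hfeq p hp u (hall u (Sym2.mem_mk_left u v))).trans
        (hfeq p hp v (hall v (Sym2.mem_mk_right u v))).symm)
  set Dc : Finset G.Dart := univ.filter (fun d => f d.fst ≠ f d.snd) with hDc
  -- Step A : Dc.card = 2 * c
  have hA : Dc.card = 2 * c := by
    rw [hc]
    have hmap : ∀ d ∈ Dc, d.edge ∈
        (G.edgeFinset.filter fun e => ¬ ∃ p ∈ P.parts, ∀ v ∈ e, v ∈ p) := by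
      intro d hd
      rw [mem_filter, SimpleGraph.mem_edgeFinset]
      refine ⟨d.edge_mem, ?_⟩
      exact (hcrossiff d.fst d.snd).mpr ((mem_filter.mp hd).2)
    rw [card_eq_sum_card_fiberwise hmap, Finset.sum_const_nat (m := 2), mul_comm]
    intro e he
    rw [mem_filter, SimpleGraph.mem_edgeFinset] at he
    have heq : Dc.filter (fun d => d.edge = e) = univ.filter (fun d : G.Dart => d.edge = e) := by
      ext d
      simp only [hDc, filter_filter, mem_filter, mem_univ, true_and]
      refine ⟨fun h => h.2, fun h => ⟨?_, h⟩⟩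
      have he2 := he.2
      rw [← h] at he2
      exact (hcrossiff d.fst d.snd).mp he2
    rw [heq]
    exact G.dart_edge_fiber_card e he.1
  -- Step B : Dc.card = ∑ v, degIn G (f v)ᶜ v
  have hB : Dc.card = ∑ v, degIn G (f v)ᶜ v := by
    rw [card_eq_sum_card_fiberwise (f := fun d => d.fst) (t := univ)
      (fun d _ => mem_univ _)]
    refine Finset.sum_congr rfl fun v _ => ?_
    rw [degIn]
    apply Finset.card_bij (fun d _ => d.snd)
    · intro d hd
      rw [hDc, filter_filter, mem_filter] at hd
      obtain ⟨-, hcross, hfst⟩ := hd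
      subst hfst
      rw [mem_inter, SimpleGraph.mem_neighborFinset, Finset.mem_compl]
      exact ⟨d.adj, fun h => hcross ((hfeq _ (hfmem d.fst) d.snd h).symm)⟩
    · intro a ha b hb h
      rw [mem_filter] at ha hb
      apply SimpleGraph.Dart.ext
      apply Prod.ext
      · rw [ha.2, hb.2]
      · exact h
    · intro w hw
      rw [mem_inter, SimpleGraph.mem_neighborFinset, Finset.mem_compl] at hw
      refine ⟨⟨(v, w), hw.1⟩, ?_, rfl⟩
      rw [hDc, filter_filter, mem_filter]
      refine ⟨mem_univ _, fun h => hw.2 ?_, rfl⟩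
      rw [show (f v : Finset V) = f w from h]
      exact hmem w
  -- degree split
  have hdeg : ∀ v (p : Finset V), degIn G p v + degIn G pᶜ v = G.degree v := by
    intro v p
    rw [degIn, degIn, ← Finset.sdiff_eq_inter_compl, card_inter_add_card_sdiff]
    rfl
  -- dominating lower bound
  have hlow : ∀ q ∈ P.parts, ∀ v ∈ q, r - 1 ≤ degIn G qᶜ v := by
    intro q hq v hv
    have hdisj : ∀ p ∈ P.parts.erase q, ∀ p' ∈ P.parts.erase q, p ≠ p' →
        Disjoint (G.neighborFinset v ∩ p) (G.neighborFinset v ∩ p') := by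
      intro p hp p' hp' hne
      refine Finset.disjoint_left.mpr fun w hwp hwp' => ?_
      rw [mem_inter] at hwp hwp'
      exact hne (P.eq_of_mem_parts (mem_erase.mp hp).2 (mem_erase.mp hp').2 hwp.2 hwp'.2)
    have h1 : ∀ p ∈ P.parts.erase q, 1 ≤ #(G.neighborFinset v ∩ p) := by
      intro p hp
      rw [mem_erase] at hp
      have hvp : v ∉ p := fun hvp => hp.1 (P.eq_of_mem_parts hp.2 hq hvp hv)
      obtain ⟨u, hu, hadj⟩ := (hparts p hp.2).2 v hvp
      exact card_pos.mpr ⟨u, mem_inter.mpr ⟨(G.mem_neighborFinset v u).mpr hadj.symm, hu⟩⟩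
    have h2 : (P.parts.erase q).card ≤ ∑ p ∈ P.parts.erase q, #(G.neighborFinset v ∩ p) := by
      calc (P.parts.erase q).card = ∑ _p ∈ P.parts.erase q, 1 := by
            rw [sum_const, smul_eq_mul, mul_one]
        _ ≤ _ := Finset.sum_le_sum h1
    have h3 : ∑ p ∈ P.parts.erase q, #(G.neighborFinset v ∩ p) ≤ degIn G qᶜ v := by
      rw [degIn, ← Finset.card_biUnion hdisj]
      apply card_le_card
      intro w hw
      rw [mem_biUnion] at hw
      obtain ⟨p, hp, hw⟩ := hw
      rw [mem_inter] at hw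
      rw [mem_inter, Finset.mem_compl]
      refine ⟨hw.1, fun hwq => ?_⟩
      rw [mem_erase] at hp
      exact hp.1 (P.eq_of_mem_parts hp.2 hq hw.2 hwq)
    calc r - 1 = (P.parts.erase q).card := by rw [Finset.card_erase_of_mem hq, hcard]
      _ ≤ _ := le_trans h2 h3
  -- part size lower bounds
  have hγ : ∀ q ∈ P.parts, globalDefensiveAllianceNum G k ≤ q.card :=
    fun q hq => Nat.sInf_le ⟨q, hparts q hq, rfl⟩
  have hrk : ∀ q ∈ P.parts, (r : ℤ) + k ≤ (q.card : ℤ) := by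
    intro q hq
    obtain ⟨⟨hne, hdef⟩, -⟩ := hparts q hq
    obtain ⟨v, hv⟩ := hne
    have h1 := hdef v hv
    have h2 := hlow q hq v hv
    have h3 : degIn G q v + 1 ≤ q.card := by
      have hsub : G.neighborFinset v ∩ q ⊆ q.erase v := by
        intro w hw
        rw [mem_inter, SimpleGraph.mem_neighborFinset] at hw
        exact mem_erase.mpr ⟨fun h => G.irrefl (h ▸ hw.1), hw.2⟩
      have := card_le_card hsub
      rw [card_erase_of_mem hv] at this
      have hpos : 1 ≤ q.card := card_pos.mpr ⟨v, hv⟩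
      rw [degIn]
      omega
    omega
  -- total sum lower bound pieces
  have hsplit : ∑ v, degIn G (f v)ᶜ v = ∑ q ∈ P.parts, ∑ v ∈ q, degIn G (f v)ᶜ v := by
    conv_lhs => rw [← P.biUnion_parts]
    rw [Finset.sum_biUnion P.disjoint]; rfl
  have hqsum : ∀ q ∈ P.parts, (r - 1) * q.card ≤ ∑ v ∈ q, degIn G (f v)ᶜ v := by
    intro q hq
    calc (r - 1) * q.card = ∑ _v ∈ q, (r - 1) := by rw [sum_const, smul_eq_mul, mul_comm]
      _ ≤ _ := Finset.sum_le_sum fun v hv => by rw [hfeq q hq v hv]; exact hlow q hq v hv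
  have h2c : ∑ q ∈ P.parts, (r - 1) * q.card ≤ 2 * c := by
    rw [← hA, hB, hsplit]
    exact Finset.sum_le_sum hqsum
  -- (i) in ℕ
  have hi : r * ((r - 1) * globalDefensiveAllianceNum G k) ≤ 2 * c := by
    calc r * ((r - 1) * globalDefensiveAllianceNum G k)
        = ∑ _q ∈ P.parts, (r - 1) * globalDefensiveAllianceNum G k := by
          rw [sum_const, smul_eq_mul, hcard]
      _ ≤ ∑ q ∈ P.parts, (r - 1) * q.card :=
          Finset.sum_le_sum fun q hq => Nat.mul_le_mul_left _ (hγ q hq)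
      _ ≤ 2 * c := h2c
  -- (ii) in ℤ
  have hii : (r : ℤ) * (((r : ℤ) - 1) * ((r : ℤ) + k)) ≤ 2 * c := by
    have hcast : ((∑ q ∈ P.parts, (r - 1) * q.card : ℕ) : ℤ)
        = ∑ q ∈ P.parts, ((r : ℤ) - 1) * (q.card : ℤ) := by
      rw [Nat.cast_sum]
      refine Finset.sum_congr rfl fun q hq => ?_
      push_cast [Nat.cast_sub (show 1 ≤ r by omega)]
      ring
    have h2c' : ∑ q ∈ P.parts, ((r : ℤ) - 1) * (q.card : ℤ) ≤ 2 * c := by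
      rw [← hcast]; exact_mod_cast h2c
    calc (r : ℤ) * (((r : ℤ) - 1) * ((r : ℤ) + k))
        = ∑ _q ∈ P.parts, ((r : ℤ) - 1) * ((r : ℤ) + k) := by
          rw [sum_const, hcard, nsmul_eq_mul]
      _ ≤ ∑ q ∈ P.parts, ((r : ℤ) - 1) * (q.card : ℤ) :=
          Finset.sum_le_sum fun q hq =>
            mul_le_mul_of_nonneg_left (hrk q hq) (by omega)
      _ ≤ 2 * c := h2c'
  -- (iii) in ℤ
  have hiii : 4 * (c : ℤ) + (Fintype.card V : ℤ) * k ≤ 2 * G.edgeFinset.card := by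
    have hdeg3 : ∀ v : V, 2 * (degIn G (f v)ᶜ v : ℤ) + k ≤ (G.degree v : ℤ) := by
      intro v
      have h1 := (hparts _ (hfmem v)).1.2 v (hmem v)
      have h2 := hdeg v (f v)
      omega
    have hsum3 : ∑ v : V, (2 * (degIn G (f v)ᶜ v : ℤ) + k) ≤ ∑ v : V, (G.degree v : ℤ) :=
      Finset.sum_le_sum fun v _ => hdeg3 v
    have hl : ∑ v : V, (2 * (degIn G (f v)ᶜ v : ℤ) + k)
        = 2 * ((∑ v, degIn G (f v)ᶜ v : ℕ) : ℤ) + (Fintype.card V : ℤ) * k := by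
      rw [Finset.sum_add_distrib, ← Finset.mul_sum, sum_const, card_univ, nsmul_eq_mul]
      push_cast
      ring
    have hrr : (∑ v : V, (G.degree v : ℤ)) = 2 * (G.edgeFinset.card : ℤ) := by
      have := G.sum_degrees_eq_twice_card_edges
      exact_mod_cast congrArg (Nat.cast : ℕ → ℤ) this
    rw [hl, hrr, ← hB, hA] at hsum3
    push_cast at hsum3 ⊢
    linarith
  refine ⟨?_, ?_, ?_⟩
  · have : ((r * ((r - 1) * globalDefensiveAllianceNum G k) : ℕ) : ℚ) ≤ ((2 * c : ℕ) : ℚ) :=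
      Nat.cast_le.mpr hi
    push_cast [Nat.cast_sub (by omega : 1 ≤ r)] at this
    linarith
  · have : (((r : ℤ) * (((r : ℤ) - 1) * ((r : ℤ) + k)) : ℤ) : ℚ) ≤ ((2 * (c : ℤ) : ℤ) : ℚ) :=
      Int.cast_le.mpr hii
    push_cast at this
    linarith
  · have : ((4 * (c : ℤ) + (Fintype.card V : ℤ) * k : ℤ) : ℚ)
        ≤ ((2 * (G.edgeFinset.card : ℤ) : ℤ) : ℚ) := Int.cast_le.mpr hiii
    push_cast at this
    linarith
end
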